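/- arXiv:1903.09057 — 5 statements merged into one kernel-verified Lean document; each statement's English description precedes it below -/
import Mathlib

section
/- Let r ≥ 3 and n ≥ r, and let H be an r-uniform hypergraph on n vertices. If the minimum vertex degree satisfies δ₁(H) > C(⌈n/2⌉ − 1, r−1), then H contains a weak Hamilton cycle, i.e. an alternating sequence (v₁, e₁, v₂, …, vₙ, eₙ) of distinct vertices v₁,…,vₙ and (not necessarily distinct) hyperedges e₁,…,eₙ such that {v₁,vₙ} ⊆ eₙ and {vᵢ, vᵢ₊₁} ⊆ eᵢ for every i ∈ [n−1]. -/
open Finset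

section Dirac

variable {n : ℕ} [NeZero n]

/-- the last element of `Fin n` -/
def lastF (n : ℕ) [NeZero n] : Fin n :=
  ⟨n - 1, Nat.sub_lt (Nat.pos_of_ne_zero (NeZero.ne n)) one_pos⟩

lemma lastF_add_one : lastF n + 1 = 0 := by
  have hn := Nat.pos_of_ne_zero (NeZero.ne n)
  apply Fin.ext
  rw [Fin.val_add, Fin.val_one', lastF, Fin.val_zero]
  rcases Nat.eq_or_lt_of_le hn with h | h
  · simp [← h]
  · rw [Nat.mod_eq_of_lt h]
    have : n - 1 + 1 = n := by omega
    rw [this, Nat.mod_self]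

lemma val_add_one_of_lt {i : Fin n} (h : i.val + 1 < n) : (i + 1).val = i.val + 1 := by
  have h1 : (1 : Fin n).val = 1 := by
    rw [Fin.val_one']; exact Nat.mod_eq_of_lt (by omega)
  rw [Fin.val_add, h1, Nat.mod_eq_of_lt h]

/-- reversal of the initial segment `[0, j]` -/
def flipMap (j : Fin n) : Fin n → Fin n := fun k =>
  if k.val ≤ j.val then ⟨j.val - k.val, lt_of_le_of_lt (Nat.sub_le _ _) j.isLt⟩ else k

lemma flipMap_invol (j : Fin n) : Function.Involutive (flipMap j) := by
  intro k
  unfold flipMap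
  by_cases h : k.val ≤ j.val
  · rw [if_pos h, if_pos (Nat.sub_le _ _)]
    apply Fin.ext; simp; omega
  · rw [if_neg h, if_neg h]

/-- reflection of positions `[0, j-1]` -/
def psiMap (j : Fin n) : Fin n → Fin n := fun i =>
  if h : i.val < j.val then ⟨j.val - 1 - i.val, by omega⟩ else i

lemma psiMap_invol (j : Fin n) : Function.Involutive (psiMap j) := by
  intro k
  unfold psiMap
  by_cases h : k.val < j.val
  · rw [dif_pos h, dif_pos (by simp; omega)]
    apply Fin.ext; simp; omega
  · rw [dif_neg h, dif_neg h]

variable (A : Fin n → Fin n → Prop) [DecidableRel A]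

/-- the set of good cyclic positions of `v` -/
def goodSet (v : Fin n → Fin n) : Finset (Fin n) :=
  Finset.univ.filter (fun i => A (v i) (v (i + 1)))

lemma exchange (hsymm : ∀ x y, A x y → A y x) (hn : 3 ≤ n)
    (v : Fin n → Fin n) (j : Fin n) (hj : j.val < n - 1)
    (hjS : A (v (lastF n)) (v j)) (hjT : A (v 0) (v (j + 1)))
    (hbad : ¬ A (v (lastF n)) (v 0)) :
    (goodSet A v).card < (goodSet A (v ∘ flipMap j)).card := by
  set w := v ∘ flipMap j with hw
  have hlastval : (lastF n).val = n - 1 := rfl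
  -- basic computations
  have hwlast : w (lastF n) = v (lastF n) := by
    show v (flipMap j (lastF n)) = v (lastF n)
    congr 1
    unfold flipMap
    rw [if_neg (by rw [hlastval]; omega)]
  have hw0 : w 0 = v j := by
    show v (flipMap j 0) = v j
    congr 1
  have hwj : w j = v 0 := by
    show v (flipMap j j) = v 0
    congr 1
    unfold flipMap
    rw [if_pos le_rfl]
    apply Fin.ext; simp
  have hj1val : (j + 1).val = j.val + 1 := val_add_one_of_lt (by omega)
  have hwj1 : w (j + 1) = v (j + 1) := by
    show v (flipMap j (j + 1)) = v (j + 1)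
    congr 1
    unfold flipMap
    rw [if_neg (by rw [hj1val]; omega)]
  have hlast1 : (lastF n) + 1 = (0 : Fin n) := lastF_add_one
  -- lastF is bad for v
  have hlast_notin : lastF n ∉ goodSet A v := by
    simp only [goodSet, mem_filter, mem_univ, true_and, hlast1]
    exact hbad
  -- lastF is good for w
  have hlast_in : lastF n ∈ goodSet A w := by
    simp only [goodSet, mem_filter, mem_univ, true_and, hlast1, hwlast, hw0]
    exact hjS
  -- psi maps goodSet v into goodSet w
  have hpsi : ∀ i ∈ goodSet A v, psiMap j i ∈ goodSet A w := by
    intro i hi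
    simp only [goodSet, mem_filter, mem_univ, true_and] at hi ⊢
    by_cases h1 : i.val < j.val
    · -- reversed segment
      have hpi : psiMap j i = ⟨j.val - 1 - i.val, by omega⟩ := dif_pos h1
      have hpi1 : (psiMap j i + 1).val = j.val - i.val := by
        rw [hpi, val_add_one_of_lt (by simp; omega)]
        simp; omega
      have hiv : (i + 1).val = i.val + 1 := val_add_one_of_lt (by omega)
      have e1 : w (psiMap j i) = v (i + 1) := by
        show v (flipMap j _) = _
        congr 1
        unfold flipMap
        rw [hpi, if_pos (by simp; omega)]
        apply Fin.ext
        simp [hiv]; omega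
      have e2 : w (psiMap j i + 1) = v i := by
        show v (flipMap j _) = _
        congr 1
        unfold flipMap
        rw [if_pos (by rw [hpi1]; omega)]
        apply Fin.ext
        simp [hpi1]; omega
      rw [e1, e2]
      exact hsymm _ _ hi
    · by_cases h2 : i = j
      · -- position j
        have hpi : psiMap j i = j := by rw [h2]; exact dif_neg (by omega)
        rw [hpi, hwj, hwj1]
        exact hjT
      · by_cases h3 : i = lastF n
        · exact absurd hi (by rw [h3, hlast1]; exact hbad)
        · -- unchanged segment: j < i < n - 1
          have hij : j.val < i.val := by
            rcases Nat.lt_or_ge j.val i.val with h | h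
            · exact h
            · exact absurd (Fin.ext (by omega)) h2
          have hin : i.val < n - 1 := by
            rcases Nat.lt_or_ge i.val (n-1) with h | h
            · exact h
            · exact absurd (Fin.ext (by rw [hlastval]; omega)) h3
          have hpi : psiMap j i = i := dif_neg (by omega)
          have hiv : (i + 1).val = i.val + 1 := val_add_one_of_lt (by omega)
          have e1 : w i = v i := by
            show v (flipMap j i) = v i
            congr 1
            unfold flipMap
            rw [if_neg (by omega)]
          have e2 : w (i + 1) = v (i + 1) := by
            show v (flipMap j (i+1)) = v (i+1)
            congr 1
            unfold flipMap
            rw [if_neg (by rw [hiv]; omega)]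
          rw [hpi, e1, e2]
          exact hi
  -- conclude
  have hinj : Function.Injective (psiMap j) := (psiMap_invol j).injective
  have hsub : insert (lastF n) ((goodSet A v).image (psiMap j)) ⊆ goodSet A w := by
    intro x hx
    rcases mem_insert.mp hx with h | h
    · rw [h]; exact hlast_in
    · obtain ⟨i, hi, rfl⟩ := mem_image.mp h
      exact hpsi i hi
  have hnotin : lastF n ∉ (goodSet A v).image (psiMap j) := by
    intro h
    obtain ⟨i, hi, heq⟩ := mem_image.mp h
    have : psiMap j (lastF n) = lastF n := dif_neg (by rw [hlastval]; omega)
    have : i = lastF n := by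
      have := hinj (heq.trans this.symm)
      exact this
    exact hlast_notin (this ▸ hi)
  calc (goodSet A v).card = ((goodSet A v).image (psiMap j)).card :=
        (card_image_of_injective _ hinj).symm
    _ < (insert (lastF n) ((goodSet A v).image (psiMap j))).card := by
        rw [card_insert_of_notMem hnotin]; omega
    _ ≤ (goodSet A w).card := card_le_card hsub

end Dirac

section Dirac2

variable {n : ℕ} [NeZero n] (A : Fin n → Fin n → Prop) [DecidableRel A]

lemma dirac (hsymm : ∀ x y, A x y → A y x) (hirr : ∀ x, ¬ A x x) (hn : 3 ≤ n)
    (hdeg : ∀ x, n ≤ 2 * (univ.filter (fun y => A x y)).card) :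
    ∃ v : Fin n → Fin n, Function.Bijective v ∧ ∀ i, A (v i) (v (i + 1)) := by
  obtain ⟨p, -, hmax⟩ := Finset.exists_max_image (univ : Finset (Equiv.Perm (Fin n)))
    (fun q => (goodSet A q).card) univ_nonempty
  refine ⟨p, p.bijective, ?_⟩
  by_contra hcon
  push_neg at hcon
  obtain ⟨i, hi⟩ := hcon
  -- rotate so that the bad position is at `lastF n`
  set u : Fin n → Fin n := fun k => p (k + (i + 1)) with hu
  have hu_bij : Function.Bijective u :=
    p.bijective.comp (Equiv.addRight (i + 1)).bijective
  have hmem : ∀ k, k ∈ goodSet A u ↔ k + (i + 1) ∈ goodSet A p := by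
    intro k
    simp only [goodSet, mem_filter, mem_univ, true_and, hu]
    have he : (k + 1) + (i + 1) = (k + (i + 1)) + 1 := by rw [add_right_comm]
    rw [he]
  have hcard : (goodSet A u).card = (goodSet A p).card := by
    apply card_nbij' (fun k => k + (i + 1)) (fun k => k - (i + 1))
    · intro k hk; exact (hmem k).mp hk
    · intro k hk
      apply (hmem _).mpr
      rwa [sub_add_cancel]
    · intro k _; exact add_sub_cancel_right k (i + 1)
    · intro k _; exact sub_add_cancel k (i + 1)
  -- the bad pair of `u` sits at position `lastF n`
  have hulast : u (lastF n) = p i := by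
    show p (lastF n + (i + 1)) = p i
    congr 1
    rw [show (i : Fin n) + 1 = 1 + i from add_comm _ _, ← add_assoc, lastF_add_one, zero_add]
  have hu0 : u 0 = p (i + 1) := by
    show p (0 + (i + 1)) = p (i + 1)
    rw [zero_add]
  have hbad : ¬ A (u (lastF n)) (u 0) := by rw [hulast, hu0]; exact hi
  -- pigeonhole to find the exchange position
  set x := u (lastF n) with hx
  set y := u 0 with hy
  set S : Finset (Fin n) := univ.filter (fun j => A x (u j)) with hS
  set T : Finset (Fin n) := univ.filter (fun j => A y (u (j + 1))) with hT
  have hScard : S.card = (univ.filter (fun z => A x z)).card := by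
    apply card_nbij (fun j => u j)
    · intro j hj
      simp only [hS, mem_filter, mem_univ, true_and] at hj ⊢
      simpa using hj
    · intro a _ b _ hab; exact hu_bij.1 hab
    · intro z hz
      simp only [coe_filter, Set.mem_setOf_eq, mem_univ, true_and] at hz
      obtain ⟨j, rfl⟩ := hu_bij.2 z
      exact ⟨j, mem_coe.mpr (mem_filter.mpr ⟨mem_univ _, hz⟩), rfl⟩
  have hTcard : T.card = (univ.filter (fun z => A y z)).card := by
    apply card_nbij (fun j => u (j + 1))
    · intro j hj
      simp only [hT, mem_filter, mem_univ, true_and] at hj ⊢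
      simpa using hj
    · intro a _ b _ hab
      have := hu_bij.1 hab
      simpa using add_right_cancel this
    · intro z hz
      simp only [coe_filter, Set.mem_setOf_eq, mem_univ, true_and] at hz
      obtain ⟨j, rfl⟩ := hu_bij.2 z
      have hsz : j - 1 + 1 = j := sub_add_cancel j 1
      exact ⟨j - 1, mem_coe.mpr (mem_filter.mpr ⟨mem_univ _, by rw [hsz]; exact hz⟩),
        by show u (j - 1 + 1) = u j; rw [hsz]⟩
  have hSl : lastF n ∉ S := by
    simp only [hS, mem_filter, mem_univ, true_and]
    rw [← hx]; exact hirr x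
  have hTl : lastF n ∉ T := by
    simp only [hT, mem_filter, mem_univ, true_and]
    rw [lastF_add_one, ← hy]; exact hirr y
  have hsub : S ∪ T ⊆ univ.erase (lastF n) := by
    intro k hk
    rcases mem_union.mp hk with h | h
    · exact mem_erase.mpr ⟨fun he => hSl (he ▸ h), mem_univ _⟩
    · exact mem_erase.mpr ⟨fun he => hTl (he ▸ h), mem_univ _⟩
  have hSTn : S.card + T.card ≥ n := by
    have h1 := hdeg x
    have h2 := hdeg y
    omega
  have hint : (S ∩ T).Nonempty := by
    rw [← card_pos]
    have h1 : (S ∪ T).card ≤ n - 1 := by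
      calc (S ∪ T).card ≤ (univ.erase (lastF n)).card := card_le_card hsub
        _ = n - 1 := by rw [card_erase_of_mem (mem_univ _), card_univ, Fintype.card_fin]
    have h2 := card_union_add_card_inter S T
    omega
  obtain ⟨j, hj⟩ := hint
  rw [mem_inter] at hj
  have hjS' : A x (u j) := by
    have := hj.1; simp only [hS, mem_filter, mem_univ, true_and] at this; exact this
  have hjT' : A y (u (j + 1)) := by
    have := hj.2; simp only [hT, mem_filter, mem_univ, true_and] at this; exact this
  have hjne : j.val < n - 1 := by
    have h1 : j ≠ lastF n := fun h => hSl (h ▸ hj.1)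
    have h2 : j.val ≠ n - 1 := fun h => h1 (Fin.ext h)
    have := j.isLt
    omega
  -- the exchange improves the count: contradiction with maximality
  have hexch := exchange A hsymm hn u j hjne hjS' hjT' hbad
  have hwbij : Function.Bijective (u ∘ flipMap j) :=
    hu_bij.comp (flipMap_invol j).bijective
  have hle := hmax (Equiv.ofBijective _ hwbij) (mem_univ _)
  have hcoe : ⇑(Equiv.ofBijective _ hwbij) = u ∘ flipMap j := rfl
  rw [hcoe] at hle
  omega

end Dirac2

/-- A weak Hamilton cycle in an `r`-uniform hypergraph on vertex set `Fin n`
with edge set `E`: a cyclic alternating sequence of `n` distinct vertices and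
`n` (not necessarily distinct) hyperedges, with each consecutive pair of
vertices (cyclically) contained in the corresponding hyperedge. -/
def IsWeakHamCycle (n : ℕ) [NeZero n] (E : Finset (Finset (Fin n)))
    (v : Fin n → Fin n) (e : Fin n → Finset (Fin n)) : Prop :=
  Function.Bijective v ∧ (∀ i, e i ∈ E) ∧ ∀ i : Fin n, v i ∈ e i ∧ v (i + 1) ∈ e i

theorem stmt0 (r n : ℕ) [NeZero n] (hr : 3 ≤ r) (hn : r ≤ n)
    (E : Finset (Finset (Fin n))) (hE : ∀ s ∈ E, s.card = r)
    (hdeg : ∀ x : Fin n,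
      (((n + 1) / 2 - 1).choose (r - 1)) < (E.filter (fun s => x ∈ s)).card) :
    ∃ v e, IsWeakHamCycle n E v e := by
  classical
  have hn3 : 3 ≤ n := le_trans hr hn
  set A : Fin n → Fin n → Prop := fun x y => x ≠ y ∧ ∃ s ∈ E, x ∈ s ∧ y ∈ s with hA
  have hsymm : ∀ x y, A x y → A y x := by
    rintro x y ⟨h1, s, hs, hxs, hys⟩
    exact ⟨Ne.symm h1, s, hs, hys, hxs⟩
  have hirr : ∀ x, ¬ A x x := fun x h => h.1 rfl
  have hdeg' : ∀ x, n ≤ 2 * (univ.filter (fun y => A x y)).card := by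
    intro x
    by_contra hlt
    push_neg at hlt
    set N := univ.filter (fun y => A x y) with hN
    have hNcard : N.card ≤ (n + 1) / 2 - 1 := by omega
    have hmapmem : ∀ s ∈ E.filter (fun s => x ∈ s), s.erase x ∈ N.powersetCard (r - 1) := by
      intro s hs
      rw [mem_filter] at hs
      rw [mem_powersetCard]
      constructor
      · intro y hy
        rw [mem_erase] at hy
        rw [hN, mem_filter]
        exact ⟨mem_univ _, Ne.symm hy.1, s, hs.1, hs.2, hy.2⟩
      · rw [card_erase_of_mem hs.2, hE s hs.1]
    have hinj : Set.InjOn (fun s : Finset (Fin n) => s.erase x) ↑(E.filter (fun s => x ∈ s)) := by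
      intro s hs t ht hst
      simp only [coe_filter, Set.mem_setOf_eq] at hs ht
      have h2 : insert x (s.erase x) = insert x (t.erase x) := by
        simp only at hst; rw [hst]
      rwa [insert_erase hs.2, insert_erase ht.2] at h2
    have hle := card_le_card_of_injOn _ hmapmem hinj
    rw [card_powersetCard] at hle
    have hch : N.card.choose (r - 1) ≤ ((n + 1) / 2 - 1).choose (r - 1) :=
      Nat.choose_le_choose _ hNcard
    exact absurd ((hdeg x).trans_le (hle.trans hch)) (lt_irrefl _)
  obtain ⟨v, hbij, hgood⟩ := dirac A hsymm hirr hn3 hdeg'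
  exact ⟨v, fun i => ((hgood i).2).choose, hbij,
    fun i => ((hgood i).2).choose_spec.1,
    fun i => ((hgood i).2).choose_spec.2⟩
end

section
/- Let r ≥ 3 and let H be an r-uniform hypergraph on n > 2r−2 vertices. If δ₁(H) ≥ C(⌈n/2⌉ − 1, r−1) + n − 1, then H contains a Hamilton Berge cycle. -/
section Aux

variable {n : ℕ}

/-- A Berge path with `L` vertices `v 0, …, v (L-1)` and edges `e 0, …, e (L-2)`. -/
def BP (E : Finset (Finset (Fin n))) (L : ℕ) (v : ℕ → Fin n) (e : ℕ → Finset (Fin n)) : Prop :=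
  (∀ i < L, ∀ j < L, v i = v j → i = j) ∧
  (∀ i j, i + 1 < L → j + 1 < L → e i = e j → i = j) ∧
  (∀ i, i + 1 < L → e i ∈ E ∧ v i ∈ e i ∧ v (i + 1) ∈ e i)

/-- A Berge cycle with `L` vertices and `L` edges. -/
def BC (E : Finset (Finset (Fin n))) (L : ℕ) (v : ℕ → Fin n) (e : ℕ → Finset (Fin n)) : Prop :=
  (∀ i < L, ∀ j < L, v i = v j → i = j) ∧
  (∀ i < L, ∀ j < L, e i = e j → i = j) ∧
  (∀ i < L, e i ∈ E ∧ v i ∈ e i ∧ v ((i + 1) % L) ∈ e i)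

lemma choose_strict_mono' {a b k : ℕ} (hk : 1 ≤ k) (hab : a < b) (hkb : k ≤ b) :
    a.choose k < b.choose k := by
  rcases lt_or_ge a k with h | h
  · calc a.choose k = 0 := Nat.choose_eq_zero_of_lt h
    _ < b.choose k := Nat.choose_pos hkb
  · have h1 : a.choose k < (a+1).choose k := by
      have : (a+1).choose k = a.choose (k-1) + a.choose k := by
        have hk' : k = (k-1) + 1 := by omega
        rw [hk']; exact Nat.choose_succ_succ a (k-1)
      have : 0 < a.choose (k-1) := Nat.choose_pos (by omega)
      omega
    exact lt_of_lt_of_le h1 (Nat.choose_le_choose k (by omega))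

lemma card_le_choose_of_erase {r : ℕ} (x : Fin n) (U : Finset (Finset (Fin n)))
    (hU : ∀ s ∈ U, x ∈ s ∧ s.card = r) (N : Finset (Fin n))
    (hN : ∀ s ∈ U, s.erase x ⊆ N) :
    U.card ≤ N.card.choose (r - 1) := by
  classical
  have : U.card ≤ (N.powersetCard (r-1)).card := by
    apply Finset.card_le_card_of_injOn (fun s => s.erase x)
    · intro s hs
      simp only [Finset.mem_coe, Finset.mem_powersetCard]
      exact ⟨hN s hs, by rw [Finset.card_erase_of_mem (hU s hs).1, (hU s hs).2]⟩
    · intro s hs t ht hst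
      have hs' := (hU s hs).1
      have ht' := (hU t ht).1
      simp only at hst
      rw [← Finset.insert_erase hs', ← Finset.insert_erase ht', hst]
  rwa [Finset.card_powersetCard] at this

lemma BP_le_card {E : Finset (Finset (Fin n))} {L : ℕ} {v : ℕ → Fin n} {e : ℕ → Finset (Fin n)}
    (h : BP E L v e) : L ≤ n := by
  classical
  have : Function.Injective (fun i : Fin L => v i.val) := by
    intro i j hij
    exact Fin.ext (h.1 i.val i.isLt j.val j.isLt hij)
  simpa using Fintype.card_le_of_injective _ this

end Aux

section Aux2

variable {n : ℕ} {E : Finset (Finset (Fin n))} {L : ℕ} {v : ℕ → Fin n} {e : ℕ → Finset (Fin n)}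

lemma extend_front (h : BP E L v e) {f : Finset (Fin n)} (hfE : f ∈ E)
    (hfu : ∀ i, i + 1 < L → f ≠ e i) (hv0 : v 0 ∈ f) {w : Fin n} (hw : w ∈ f)
    (hwnot : ∀ j < L, w ≠ v j) (hL : 1 ≤ L) :
    BP E (L + 1) (fun i => if i = 0 then w else v (i - 1))
      (fun i => if i = 0 then f else e (i - 1)) := by
  obtain ⟨hvinj, heinj, hmem⟩ := h
  refine ⟨?_, ?_, ?_⟩
  · intro i hi j hj hij
    simp only at hij
    split_ifs at hij with h1 h2 h2
    · omega
    · exact absurd hij (hwnot (j-1) (by omega))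
    · exact absurd hij.symm (hwnot (i-1) (by omega))
    · have := hvinj (i-1) (by omega) (j-1) (by omega) hij; omega
  · intro i j hi hj hij
    simp only at hij
    split_ifs at hij with h1 h2 h2
    · omega
    · exact absurd hij (hfu (j-1) (by omega))
    · exact absurd hij.symm (hfu (i-1) (by omega))
    · have := heinj (i-1) (j-1) (by omega) (by omega) hij; omega
  · intro i hi
    by_cases h1 : i = 0
    · subst h1; simpa using ⟨hfE, hw, hv0⟩
    · have h2 : (i - 1) + 1 < L := by omega
      have := hmem (i-1) h2
      simp only [if_neg h1, if_neg (by omega : ¬ i + 1 = 0)]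
      have : v (i + 1 - 1) = v ((i-1)+1) := by congr 1; omega
      rw [this]
      exact ⟨(hmem (i-1) h2).1, by
        have : v (i - 1 + 1) = v i := by congr 1; omega
        have h3 := (hmem (i-1) h2).2.1
        exact h3, (hmem (i-1) h2).2.2⟩

lemma extend_back (h : BP E L v e) {f : Finset (Fin n)} (hfE : f ∈ E)
    (hfu : ∀ i, i + 1 < L → f ≠ e i) (hvL : v (L - 1) ∈ f) {w : Fin n} (hw : w ∈ f)
    (hwnot : ∀ j < L, w ≠ v j) (hL : 1 ≤ L) :
    BP E (L + 1) (fun i => if i < L then v i else w)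
      (fun i => if i + 1 < L then e i else f) := by
  obtain ⟨hvinj, heinj, hmem⟩ := h
  refine ⟨?_, ?_, ?_⟩
  · intro i hi j hj hij
    simp only at hij
    split_ifs at hij with h1 h2 h2
    · exact hvinj _ h1 _ h2 hij
    · exact absurd hij.symm (hwnot _ h1)
    · exact absurd hij (hwnot _ h2)
    · omega
  · intro i j hi hj hij
    simp only at hij
    split_ifs at hij with h1 h2 h2
    · exact heinj _ _ h1 h2 hij
    · exact absurd hij.symm (hfu _ h1)
    · exact absurd hij (hfu _ h2)
    · omega
  · intro i hi
    by_cases h1 : i + 1 < L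
    · have := hmem i h1
      simp only [if_pos h1, if_pos (by omega : i < L), if_pos (by omega : i + 1 < L)]
      exact this
    · have hiL : i = L - 1 := by omega
      simp only [if_neg h1, if_pos (by omega : i < L), if_neg (by omega : ¬ i + 1 < L)]
      subst hiL
      exact ⟨hfE, hvL, hw⟩

end Aux2

section Aux3

variable {n : ℕ} {E : Finset (Finset (Fin n))} {L : ℕ} {v : ℕ → Fin n} {e : ℕ → Finset (Fin n)}

/-- Closing a Berge path into a Berge cycle using one fresh edge containing both endpoints. -/
lemma close_cycle0 (h : BP E L v e) (hL : 1 ≤ L) {f : Finset (Fin n)} (hfE : f ∈ E)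
    (hfu : ∀ i, i + 1 < L → f ≠ e i) (h0 : v 0 ∈ f) (h1 : v (L - 1) ∈ f) :
    BC E L v (fun i => if i + 1 < L then e i else f) := by
  obtain ⟨hvinj, heinj, hmem⟩ := h
  refine ⟨hvinj, ?_, ?_⟩
  · intro i hi j hj hij
    simp only at hij
    split_ifs at hij with ha hb hb
    · exact heinj _ _ ha hb hij
    · exact absurd hij.symm (hfu _ ha)
    · exact absurd hij (hfu _ hb)
    · omega
  · intro i hi
    by_cases ha : i + 1 < L
    · simp only [if_pos ha]
      have := hmem i ha
      rw [Nat.mod_eq_of_lt ha]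
      exact this
    · have hiL : i = L - 1 := by omega
      simp only [if_neg ha]
      subst hiL
      have : (L - 1 + 1) % L = 0 := by
        have : L - 1 + 1 = L := by omega
        rw [this, Nat.mod_self]
      rw [this]
      exact ⟨hfE, h1, h0⟩

/-- Closing a Berge path into a cycle by a "crossing" at pair-index `i`:
the cycle is `v 0, …, v i, v (L-1), v (L-2), …, v (i+1)`. -/
lemma close_cycle (h : BP E L v e) {i : ℕ} (hi : i + 1 < L) {F G : Finset (Fin n)}
    (hFE : F ∈ E) (hGE : G ∈ E) (hFG : F ≠ G)
    (hF1 : v (i + 1) ∈ F) (hF0 : v 0 ∈ F)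
    (hG1 : v i ∈ G) (hG2 : v (L - 1) ∈ G)
    (hnew : ∀ j, j + 1 < L → j ≠ i → F ≠ e j ∧ G ≠ e j) :
    BC E L (fun j => if j ≤ i then v j else v (L + i - j))
      (fun j => if j < i then e j else if j = i then G else
        if j + 1 < L then e (L + i - j - 1) else F) := by
  obtain ⟨hvinj, heinj, hmem⟩ := h
  have hL : 2 ≤ L := by omega
  refine ⟨?_, ?_, ?_⟩
  · intro a ha b hb hab
    simp only at hab
    split_ifs at hab with h1 h2 h2
    · exact hvinj _ (by omega) _ (by omega) hab
    · have := hvinj _ (by omega) _ (by omega) hab; omega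
    · have := hvinj _ (by omega) _ (by omega) hab; omega
    · have := hvinj _ (by omega) _ (by omega) hab; omega
  · intro a ha b hb hab
    simp only at hab
    split_ifs at hab with h1 h2 h2 h3 h4 h4 h5 h5 h6 h6 h7 h7
    all_goals first
      | omega
      | (exact heinj _ _ (by omega) (by omega) hab)
      | (have := heinj _ _ (by omega) (by omega) hab; omega)
      | (exact absurd hab.symm (hnew _ (by omega) (by omega)).2)
      | (exact absurd hab (hnew _ (by omega) (by omega)).2)
      | (exact absurd hab.symm (hnew _ (by omega) (by omega)).1)
      | (exact absurd hab (hnew _ (by omega) (by omega)).1)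
      | (exact absurd hab (fun hh => hFG hh.symm))
      | (exact absurd hab hFG)
  · intro j hj
    by_cases h1 : j < i
    · simp only [if_pos h1, if_pos (by omega : j ≤ i), Nat.mod_eq_of_lt (by omega : j + 1 < L),
        if_pos (by omega : j + 1 ≤ i)]
      exact hmem j (by omega)
    · by_cases h2 : j = i
      · subst h2
        simp only [if_neg (lt_irrefl j), if_pos rfl, if_pos (le_refl j),
          Nat.mod_eq_of_lt (by omega : j + 1 < L), if_neg (by omega : ¬ j + 1 ≤ j)]
        have : L + j - (j + 1) = L - 1 := by omega
        rw [this]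
        exact ⟨hGE, hG1, hG2⟩
      · by_cases h3 : j + 1 < L
        · simp only [if_neg h1, if_neg h2, if_pos h3, if_neg (by omega : ¬ j ≤ i),
            Nat.mod_eq_of_lt h3, if_neg (by omega : ¬ j + 1 ≤ i)]
          have hk : (L + i - j - 1) + 1 < L := by omega
          have e1 : L + i - j = (L + i - j - 1) + 1 := by omega
          have e2 : L + i - (j + 1) = L + i - j - 1 := by omega
          rw [e1, e2]
          exact ⟨(hmem _ hk).1, (hmem _ hk).2.2, (hmem _ hk).2.1⟩
        · have hjL : j = L - 1 := by omega
          simp only [if_neg h1, if_neg h2, if_neg h3, if_neg (by omega : ¬ j ≤ i)]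
          subst hjL
          have : (L - 1 + 1) % L = 0 := by
            have : L - 1 + 1 = L := by omega
            rw [this, Nat.mod_self]
          rw [this]
          have : L + i - (L - 1) = i + 1 := by omega
          rw [this]
          simp only [if_pos (by omega : 0 ≤ i)]
          exact ⟨hFE, hF1, hF0⟩

end Aux3

section Aux4

variable {n : ℕ} {E : Finset (Finset (Fin n))} {L : ℕ} {v : ℕ → Fin n} {e : ℕ → Finset (Fin n)}

lemma cv_image {i : ℕ} (hi : i + 1 < L) :
    (Finset.range L).image (fun j => if j ≤ i then v j else v (L + i - j)) =
      (Finset.range L).image v := by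
  apply Finset.Subset.antisymm
  · intro x hx
    rw [Finset.mem_image] at hx ⊢
    obtain ⟨j, hj, hjx⟩ := hx
    rw [Finset.mem_range] at hj
    by_cases h1 : j ≤ i
    · exact ⟨j, Finset.mem_range.2 hj, by simpa [if_pos h1] using hjx⟩
    · exact ⟨L + i - j, Finset.mem_range.2 (by omega), by simpa [if_neg h1] using hjx⟩
  · intro x hx
    rw [Finset.mem_image] at hx ⊢
    obtain ⟨k, hk, hkx⟩ := hx
    rw [Finset.mem_range] at hk
    by_cases h1 : k ≤ i
    · exact ⟨k, Finset.mem_range.2 (by omega), by simpa [if_pos h1] using hkx⟩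
    · refine ⟨L + i - k, Finset.mem_range.2 (by omega), ?_⟩
      have h2 : ¬ (L + i - k ≤ i) := by omega
      have h3 : L + i - (L + i - k) = k := by omega
      simp only [if_neg h2, h3]
      exact hkx

lemma mod_succ_mod (a : ℕ) (hL : 1 ≤ L) : ((a % L) + 1) % L = (a + 1) % L := by
  conv_rhs => rw [Nat.add_mod]
  rcases eq_or_lt_of_le hL with h | h
  · simp [← h, Nat.mod_one]
  · rw [Nat.mod_eq_of_lt (by omega : 1 < L)]

lemma cycle_to_path (h : BC E L v e) (hL : 1 ≤ L) {f : Finset (Fin n)} (hfE : f ∈ E)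
    {w : Fin n} (hw : w ∈ f) (hfu : ∀ j < L, f ≠ e j) (hwnot : ∀ j < L, w ≠ v j)
    {t : ℕ} (ht : t < L) (htf : v t ∈ f) :
    BP E (L + 1) (fun j => if j = 0 then w else v ((t + (j - 1)) % L))
      (fun j => if j = 0 then f else e ((t + (j - 1)) % L)) := by
  obtain ⟨hvinj, heinj, hmem⟩ := h
  have key : ∀ a b : ℕ, a < L → b < L → (t + a) % L = (t + b) % L → a = b := by
    intro a b ha hb hab
    rcases le_or_gt a b with hle | hlt
    · have : L ∣ (t + b) - (t + a) := (Nat.modEq_iff_dvd' (by omega)).mp hab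
      rcases this with ⟨c, hc⟩
      rcases Nat.eq_zero_or_pos c with h0 | h0
      · subst h0; omega
      · have : L ≤ L * c := Nat.le_mul_of_pos_right L h0
        omega
    · have : L ∣ (t + a) - (t + b) := (Nat.modEq_iff_dvd' (by omega)).mp hab.symm
      rcases this with ⟨c, hc⟩
      rcases Nat.eq_zero_or_pos c with h0 | h0
      · subst h0; omega
      · have : L ≤ L * c := Nat.le_mul_of_pos_right L h0
        omega
  refine ⟨?_, ?_, ?_⟩
  · intro a ha b hb hab
    simp only at hab
    split_ifs at hab with h1 h2 h2
    · omega
    · exact absurd hab (hwnot _ (Nat.mod_lt _ (by omega)))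
    · exact absurd hab.symm (hwnot _ (Nat.mod_lt _ (by omega)))
    · have := key (a-1) (b-1) (by omega) (by omega)
        (hvinj _ (Nat.mod_lt _ (by omega)) _ (Nat.mod_lt _ (by omega)) hab)
      omega
  · intro a b ha hb hab
    simp only at hab
    split_ifs at hab with h1 h2 h2
    · omega
    · exact absurd hab (hfu _ (Nat.mod_lt _ (by omega)))
    · exact absurd hab.symm (hfu _ (Nat.mod_lt _ (by omega)))
    · have := key (a-1) (b-1) (by omega) (by omega)
        (heinj _ (Nat.mod_lt _ (by omega)) _ (Nat.mod_lt _ (by omega)) hab)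
      omega
  · intro a ha
    by_cases h1 : a = 0
    · subst h1
      simp only [if_pos rfl, if_neg (Nat.one_ne_zero)]
      have : (t + (1 - 1)) % L = t := by
        simp [Nat.mod_eq_of_lt ht]
      rw [this]
      exact ⟨hfE, hw, htf⟩
    · simp only [if_neg h1, if_neg (by omega : ¬ a + 1 = 0)]
      have hlt : (t + (a - 1)) % L < L := Nat.mod_lt _ (by omega)
      have := hmem _ hlt
      have harw : (t + (a + 1 - 1)) % L = ((t + (a - 1)) % L + 1) % L := by
        rw [mod_succ_mod _ hL]
        congr 1
        omega
      rw [harw]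
      exact this

end Aux4

open scoped Classical in
lemma main_cycle {n r : ℕ} [NeZero n] (hr : 3 ≤ r) (hn : 2 * r - 2 < n)
    (E : Finset (Finset (Fin n))) (hE : ∀ s ∈ E, s.card = r)
    (hdeg : ∀ x : Fin n,
      (((n + 1) / 2 - 1).choose (r - 1)) + (n - 1) ≤ (E.filter (fun s => x ∈ s)).card) :
    ∃ v e, BC E n v e := by
  classical
  set C : ℕ := ((n + 1) / 2 - 1).choose (r - 1) with hCdef
  have hn5 : 5 ≤ n := by omega
  have hC1 : 1 ≤ C := Nat.choose_pos (by omega)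
  -- longest Berge path
  set P : ℕ → Prop := fun ℓ => ∃ v e, BP E ℓ v e with hPdef
  have hP1 : P 1 := by
    refine ⟨fun _ => (⟨0, Nat.pos_of_ne_zero (NeZero.ne n)⟩ : Fin n), fun _ => ∅, ?_, ?_, ?_⟩
    · intro i hi j hj _; omega
    · intro i j hi hj _; omega
    · intro i hi; omega
  obtain ⟨L, hPL, hL1, hLn, hmax⟩ :
      ∃ L, P L ∧ 1 ≤ L ∧ L ≤ n ∧ ∀ v e, ¬ BP E (L + 1) v e := by
    refine ⟨Nat.findGreatest P n, Nat.findGreatest_spec (by omega : 1 ≤ n) hP1,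
      Nat.le_findGreatest (by omega) hP1, Nat.findGreatest_le n, ?_⟩
    intro v e hBP
    have hcard := BP_le_card hBP
    have hng : ¬ P (Nat.findGreatest P n + 1) :=
      Nat.findGreatest_is_greatest (n := n) (by omega) (by omega)
    exact hng ⟨v, e, hBP⟩
  obtain ⟨v, e, hBP⟩ := hPL
  obtain ⟨hvinj, heinj, hmem⟩ := hBP
  have hBP' : BP E L v e := ⟨hvinj, heinj, hmem⟩
  -- basic objects
  set VP : Finset (Fin n) := (Finset.range L).image v with hVPdef
  have hVPcard : VP.card = L := by
    rw [hVPdef, Finset.card_image_of_injOn, Finset.card_range]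
    intro i hi j hj hij
    exact hvinj i (Finset.mem_range.1 hi) j (Finset.mem_range.1 hj) hij
  -- unused edges containing x
  obtain ⟨U, hUmem, hUc⟩ :
      ∃ U : Fin n → Finset (Finset (Fin n)),
        (∀ x, ∀ s, s ∈ U x ↔ (s ∈ E ∧ x ∈ s ∧ ∀ i, i + 1 < L → s ≠ e i)) ∧
        (∀ x : Fin n, ∃ S : Finset ℕ,
          (∀ i ∈ S, i < L - 1 ∧ x ∈ e i) ∧ C + (n - 1) ≤ S.card + (U x).card) := by
    refine ⟨fun x => E.filter (fun s => x ∈ s ∧ ∀ i, i + 1 < L → s ≠ e i), ?_, ?_⟩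
    · intro x s
      simp only [Finset.mem_filter, and_assoc]
    · intro x
      refine ⟨(Finset.range (L - 1)).filter (fun i => x ∈ e i), ?_, ?_⟩
      · intro i hi
        have h := Finset.mem_filter.1 hi
        exact ⟨Finset.mem_range.1 h.1, h.2⟩
      · refine le_trans (hdeg x) ?_
        have hsub : E.filter (fun s => x ∈ s) ⊆
            ((Finset.range (L - 1)).filter (fun i => x ∈ e i)).image e ∪
              E.filter (fun s => x ∈ s ∧ ∀ i, i + 1 < L → s ≠ e i) := by
          intro s hs
          rw [Finset.mem_filter] at hs
          rw [Finset.mem_union]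
          by_cases hc : ∀ i, i + 1 < L → s ≠ e i
          · right; rw [Finset.mem_filter]; exact ⟨hs.1, hs.2, hc⟩
          · left
            push_neg at hc
            obtain ⟨i, hi, hie⟩ := hc
            rw [Finset.mem_image]
            exact ⟨i, by
              rw [Finset.mem_filter, Finset.mem_range]
              exact ⟨by omega, by rw [← hie]; exact hs.2⟩, hie.symm⟩
        calc (E.filter (fun s => x ∈ s)).card
            ≤ _ := Finset.card_le_card hsub
          _ ≤ _ := Finset.card_union_le _ _
          _ ≤ _ := Nat.add_le_add_right (Finset.card_image_le) _
  -- maximality: unused edges at the endpoints stay on the path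
  have hclose_front : ∀ s ∈ U (v 0), ∀ x ∈ s, ∃ j, j < L ∧ x = v j := by
    intro s hs x hx
    by_contra hcon
    push_neg at hcon
    obtain ⟨hsE, hs0, hsu⟩ := (hUmem _ s).1 hs
    exact hmax _ _ (extend_front hBP' hsE hsu hs0 hx (fun j hj => hcon j hj) hL1)
  have hclose_back : ∀ s ∈ U (v (L - 1)), ∀ x ∈ s, ∃ j, j < L ∧ x = v j := by
    intro s hs x hx
    by_contra hcon
    push_neg at hcon
    obtain ⟨hsE, hs0, hsu⟩ := (hUmem _ s).1 hs
    exact hmax _ _ (extend_back hBP' hsE hsu hs0 hx (fun j hj => hcon j hj) hL1)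
  -- Stage 1: there is a Berge cycle on the vertex set of the longest path
  have hcyc : ∃ cv ce, BC E L cv ce ∧ (Finset.range L).image cv = VP := by
    by_cases case0 : ∃ s ∈ U (v 0), v (L - 1) ∈ s
    · obtain ⟨s, hs, hsL⟩ := case0
      obtain ⟨hsE, hs0, hsu⟩ := (hUmem _ s).1 hs
      exact ⟨v, _, close_cycle0 hBP' hL1 hsE hsu hs0 hsL, rfl⟩
    · obtain ⟨Sa, hSa_mem⟩ : ∃ S : Finset ℕ, ∀ i,
          i ∈ S ↔ (i < L - 1 ∧ ∃ s ∈ U (v 0), v (i + 1) ∈ s) :=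
        ⟨(Finset.range (L - 1)).filter (fun i => ∃ s ∈ U (v 0), v (i + 1) ∈ s), by
          intro i; simp only [Finset.mem_filter, Finset.mem_range]⟩
      obtain ⟨Sb, hSb_mem⟩ : ∃ S : Finset ℕ, ∀ i,
          i ∈ S ↔ (i < L - 1 ∧ ∃ s ∈ U (v (L - 1)), v i ∈ s) :=
        ⟨(Finset.range (L - 1)).filter (fun i => ∃ s ∈ U (v (L - 1)), v i ∈ s), by
          intro i; simp only [Finset.mem_filter, Finset.mem_range]⟩
      obtain ⟨Sa', hSa'_mem⟩ : ∃ S : Finset ℕ, ∀ i,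
          i ∈ S ↔ (i < L - 1 ∧ v 0 ∈ e i) :=
        ⟨(Finset.range (L - 1)).filter (fun i => v 0 ∈ e i), by
          intro i; simp only [Finset.mem_filter, Finset.mem_range]⟩
      obtain ⟨Sb', hSb'_mem⟩ : ∃ S : Finset ℕ, ∀ i,
          i ∈ S ↔ (i < L - 1 ∧ v (L - 1) ∈ e i) :=
        ⟨(Finset.range (L - 1)).filter (fun i => v (L - 1) ∈ e i), by
          intro i; simp only [Finset.mem_filter, Finset.mem_range]⟩
      -- degree bounds transported to Sa', Sb'
      have hda : C + (n - 1) ≤ Sa'.card + (U (v 0)).card := by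
        obtain ⟨S, hS1, hS2⟩ := hUc (v 0)
        refine le_trans hS2 (Nat.add_le_add_right ?_ _)
        apply Finset.card_le_card
        intro i hi
        rw [hSa'_mem]
        exact hS1 i hi
      have hdb : C + (n - 1) ≤ Sb'.card + (U (v (L - 1))).card := by
        obtain ⟨S, hS1, hS2⟩ := hUc (v (L - 1))
        refine le_trans hS2 (Nat.add_le_add_right ?_ _)
        apply Finset.card_le_card
        intro i hi
        rw [hSb'_mem]
        exact hS1 i hi
      -- unused edge counts against Sa/Sb
      have hSa_a : (U (v 0)).card ≤ Sa.card.choose (r - 1) := by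
        have h1 : (U (v 0)).card ≤ (Sa.image (fun i => v (i + 1))).card.choose (r - 1) := by
          apply card_le_choose_of_erase (v 0)
          · exact fun s hs => ⟨((hUmem _ s).1 hs).2.1, hE s ((hUmem _ s).1 hs).1⟩
          · intro s hs x hx
            rw [Finset.mem_erase] at hx
            obtain ⟨j, hj, hjx⟩ := hclose_front s hs x hx.2
            have hj0 : j ≠ 0 := by
              intro h0; subst h0; exact hx.1 hjx
            have hjL : j ≠ L - 1 := by
              intro hL'
              exact case0 ⟨s, hs, by rw [← hL', ← hjx]; exact hx.2⟩
            rw [Finset.mem_image]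
            refine ⟨j - 1, ?_, ?_⟩
            · rw [hSa_mem]
              exact ⟨by omega, ⟨s, hs, by
                have : j - 1 + 1 = j := by omega
                rw [this, ← hjx]; exact hx.2⟩⟩
            · have : j - 1 + 1 = j := by omega
              rw [this, ← hjx]
        exact le_trans h1 (Nat.choose_le_choose _ Finset.card_image_le)
      have hSb_b : (U (v (L - 1))).card ≤ Sb.card.choose (r - 1) := by
        have h1 : (U (v (L - 1))).card ≤ (Sb.image v).card.choose (r - 1) := by
          apply card_le_choose_of_erase (v (L - 1))
          · exact fun s hs => ⟨((hUmem _ s).1 hs).2.1, hE s ((hUmem _ s).1 hs).1⟩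
          · intro s hs x hx
            rw [Finset.mem_erase] at hx
            obtain ⟨j, hj, hjx⟩ := hclose_back s hs x hx.2
            have hjL : j ≠ L - 1 := by
              intro hL'; subst hL'; exact hx.1 hjx
            rw [Finset.mem_image]
            refine ⟨j, ?_, hjx.symm⟩
            rw [hSb_mem]
            exact ⟨by omega, ⟨s, hs, by rw [← hjx]; exact hx.2⟩⟩
        exact le_trans h1 (Nat.choose_le_choose _ Finset.card_image_le)
      -- subset facts
      have hSar : Sa ⊆ Finset.range (L - 1) := by
        intro i hi; rw [hSa_mem] at hi; exact Finset.mem_range.2 hi.1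
      have hSbr : Sb ⊆ Finset.range (L - 1) := by
        intro i hi; rw [hSb_mem] at hi; exact Finset.mem_range.2 hi.1
      have hSa'r : Sa' ⊆ Finset.range (L - 1) := by
        intro i hi; rw [hSa'_mem] at hi; exact Finset.mem_range.2 hi.1
      have hSb'r : Sb' ⊆ Finset.range (L - 1) := by
        intro i hi; rw [hSb'_mem] at hi; exact Finset.mem_range.2 hi.1
      have hSa'c : Sa'.card ≤ L - 1 := by
        have := Finset.card_le_card hSa'r; rwa [Finset.card_range] at this
      have hSb'c : Sb'.card ≤ L - 1 := by
        have := Finset.card_le_card hSb'r; rwa [Finset.card_range] at this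
      -- the winning index exists
      have hW : ∃ i, i ∈ Finset.range (L - 1) ∧
          ((i ∈ Sa ∧ i ∈ Sb) ∨ (i ∈ Sa ∧ i ∈ Sb') ∨ (i ∈ Sa' ∧ i ∈ Sb)) := by
        by_contra hW
        push_neg at hW
        have hdisj1 : Disjoint Sa Sb := by
          rw [Finset.disjoint_left]
          intro i hia hib
          exact (hW i (hSar hia)).1 hia hib
        have hdisj2 : Disjoint Sa Sb' := by
          rw [Finset.disjoint_left]
          intro i hia hib
          exact (hW i (hSar hia)).2.1 hia hib
        have hdisj3 : Disjoint Sa' Sb := by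
          rw [Finset.disjoint_left]
          intro i hia hib
          exact (hW i (hSa'r hia)).2.2 hia hib
        have hc1 : Sa.card + Sb.card ≤ L - 1 := by
          rw [← Finset.card_union_of_disjoint hdisj1]
          have := Finset.card_le_card (Finset.union_subset hSar hSbr)
          rwa [Finset.card_range] at this
        have hc2 : Sa.card + Sb'.card ≤ L - 1 := by
          rw [← Finset.card_union_of_disjoint hdisj2]
          have := Finset.card_le_card (Finset.union_subset hSar hSb'r)
          rwa [Finset.card_range] at this
        have hc3 : Sa'.card + Sb.card ≤ L - 1 := by
          rw [← Finset.card_union_of_disjoint hdisj3]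
          have := Finset.card_le_card (Finset.union_subset hSa'r hSbr)
          rwa [Finset.card_range] at this
        -- both Sa and Sb are small
        have haS : Sa.card ≤ (n + 1) / 2 - 1 := by
          by_contra hbig
          push_neg at hbig
          have hb1 : Sb.card.choose (r - 1) ≤ C :=
            Nat.choose_le_choose _ (by omega)
          omega
        have hbS : Sb.card ≤ (n + 1) / 2 - 1 := by
          by_contra hbig
          push_neg at hbig
          have hb1 : Sa.card.choose (r - 1) ≤ C :=
            Nat.choose_le_choose _ (by omega)
          omega
        have h4a : (U (v 0)).card ≤ C :=
          le_trans hSa_a (Nat.choose_le_choose _ (by omega))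
        have h4b : (U (v (L - 1))).card ≤ C :=
          le_trans hSb_b (Nat.choose_le_choose _ (by omega))
        -- Sb' is everything
        have hSb'_eq : Sb' = Finset.range (L - 1) := by
          apply Finset.eq_of_subset_of_card_le hSb'r
          rw [Finset.card_range]
          omega
        -- Sa must be empty
        have hSaempty : Sa.card = 0 := by
          rw [Finset.card_eq_zero, Finset.eq_empty_iff_forall_notMem]
          intro i hia
          refine (hW i (hSar hia)).2.1 hia ?_
          rw [hSb'_eq]
          exact hSar hia
        have h5 : (U (v 0)).card = 0 := by
          have h6 := hSa_a
          rw [hSaempty, Nat.choose_eq_zero_of_lt (by omega)] at h6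
          omega
        omega
      obtain ⟨i, hir, hwin⟩ := hW
      have hi : i + 1 < L := by
        rw [Finset.mem_range] at hir; omega
      rcases hwin with ⟨hia, hib⟩ | ⟨hia, hib⟩ | ⟨hia, hib⟩
      · rw [hSa_mem] at hia
        rw [hSb_mem] at hib
        obtain ⟨f, hfU, hf1⟩ := hia.2
        obtain ⟨g, hgU, hg1⟩ := hib.2
        obtain ⟨hfE, hf0, hfu⟩ := (hUmem _ f).1 hfU
        obtain ⟨hgE, hgL, hgu⟩ := (hUmem _ g).1 hgU
        have hFG : f ≠ g := by
          intro h; subst h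
          exact case0 ⟨f, hfU, hgL⟩
        exact ⟨_, _, close_cycle hBP' hi hfE hgE hFG hf1 hf0 hg1 hgL
          (fun j hj hji => ⟨hfu j hj, hgu j hj⟩), cv_image hi⟩
      · rw [hSa_mem] at hia
        rw [hSb'_mem] at hib
        obtain ⟨f, hfU, hf1⟩ := hia.2
        obtain ⟨hfE, hf0, hfu⟩ := (hUmem _ f).1 hfU
        exact ⟨_, _, close_cycle hBP' hi hfE (hmem i hi).1 (hfu i hi) hf1 hf0
          (hmem i hi).2.1 hib.2
          (fun j hj hji => ⟨hfu j hj, fun hh => hji (heinj j i hj hi hh.symm)⟩), cv_image hi⟩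
      · rw [hSa'_mem] at hia
        rw [hSb_mem] at hib
        obtain ⟨g, hgU, hg1⟩ := hib.2
        obtain ⟨hgE, hgL, hgu⟩ := (hUmem _ g).1 hgU
        exact ⟨_, _, close_cycle hBP' hi (hmem i hi).1 hgE (fun hh => hgu i hi hh.symm)
          (hmem i hi).2.2 hia.2 hg1 hgL
          (fun j hj hji => ⟨fun hh => hji (heinj j i hj hi hh.symm), hgu j hj⟩), cv_image hi⟩
  -- Stage 2: the cycle must be Hamiltonian
  obtain ⟨cv, ce, hBC, himg⟩ := hcyc
  by_cases hLn' : L = n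
  · exact ⟨cv, ce, hLn' ▸ hBC⟩
  exfalso
  have hLn2 : L < n := by omega
  -- lower bound on L
  have hv0VP : v 0 ∈ VP := Finset.mem_image.2 ⟨0, Finset.mem_range.2 (by omega), rfl⟩
  have hNa : ∀ s ∈ U (v 0), s.erase (v 0) ⊆ VP.erase (v 0) := by
    intro s hs x hx
    rw [Finset.mem_erase] at hx ⊢
    obtain ⟨j, hj, hjx⟩ := hclose_front s hs x hx.2
    exact ⟨hx.1, by rw [hjx]; exact Finset.mem_image.2 ⟨j, Finset.mem_range.2 hj, rfl⟩⟩
  have hUa_le : (U (v 0)).card ≤ (L - 1).choose (r - 1) := by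
    have h1 : (U (v 0)).card ≤ (VP.erase (v 0)).card.choose (r - 1) :=
      card_le_choose_of_erase (v 0) (U (v 0))
        (fun s hs => ⟨((hUmem _ s).1 hs).2.1, hE s ((hUmem _ s).1 hs).1⟩) _ hNa
    have h2 : (VP.erase (v 0)).card = L - 1 := by
      rw [Finset.card_erase_of_mem hv0VP, hVPcard]
    rwa [h2] at h1
  have hL_lb : (n + 1) / 2 + 1 ≤ L := by
    by_contra hcon
    push_neg at hcon
    have h3 : (L - 1).choose (r - 1) ≤ C := Nat.choose_le_choose _ (by omega)
    obtain ⟨S, hS1, hS2⟩ := hUc (v 0)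
    have h5 : S.card ≤ L - 1 := by
      have hsub : S ⊆ Finset.range (L - 1) := fun i hi => Finset.mem_range.2 (hS1 i hi).1
      have := Finset.card_le_card hsub
      rwa [Finset.card_range] at this
    omega
  obtain ⟨w, hw⟩ : ∃ w, w ∉ VP := by
    by_contra hcon
    push_neg at hcon
    have h6 : (Finset.univ : Finset (Fin n)) ⊆ VP := fun x _ => hcon x
    have h7 := Finset.card_le_card h6
    rw [Finset.card_univ, Fintype.card_fin, hVPcard] at h7
    omega
  have hwcv : ∀ j < L, w ≠ cv j := by
    intro j hj hwj
    exact hw (by rw [← himg]; exact hwj ▸ Finset.mem_image.2 ⟨j, Finset.mem_range.2 hj, rfl⟩)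
  have key : ∃ f ∈ E, w ∈ f ∧ (∀ j < L, f ≠ ce j) ∧ ∃ x ∈ f, x ∈ VP := by
    by_contra hcon
    push_neg at hcon
    set UC : Finset (Finset (Fin n)) := (Finset.range L).image ce with hUCdef
    have hUCcard : UC.card ≤ L := le_trans Finset.card_image_le (le_of_eq (Finset.card_range _))
    have hsub : E.filter (fun s => w ∈ s) ⊆
        UC ∪ (E.filter (fun s => w ∈ s ∧ ∀ x ∈ s, x ∉ VP)) := by
      intro s hs
      rw [Finset.mem_filter] at hs
      rw [Finset.mem_union]
      by_cases hc : ∀ j < L, s ≠ ce j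
      · right
        rw [Finset.mem_filter]
        exact ⟨hs.1, hs.2, hcon s hs.1 hs.2 hc⟩
      · left
        push_neg at hc
        obtain ⟨j, hj, hje⟩ := hc
        rw [hUCdef, Finset.mem_image]
        exact ⟨j, Finset.mem_range.2 hj, hje.symm⟩
    have hmiss : (E.filter (fun s => w ∈ s ∧ ∀ x ∈ s, x ∉ VP)).card ≤
        (n - L - 1).choose (r - 1) := by
      have h1 : (E.filter (fun s => w ∈ s ∧ ∀ x ∈ s, x ∉ VP)).card ≤
          ((Finset.univ \ VP).erase w).card.choose (r - 1) := by
        apply card_le_choose_of_erase w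
        · intro s hs
          rw [Finset.mem_filter] at hs
          exact ⟨hs.2.1, hE s hs.1⟩
        · intro s hs x hx
          rw [Finset.mem_filter] at hs
          rw [Finset.mem_erase] at hx ⊢
          exact ⟨hx.1, Finset.mem_sdiff.2 ⟨Finset.mem_univ x, hs.2.2 x hx.2⟩⟩
      have h2 : ((Finset.univ \ VP).erase w).card = n - L - 1 := by
        rw [Finset.card_erase_of_mem (Finset.mem_sdiff.2 ⟨Finset.mem_univ w, hw⟩),
          Finset.card_sdiff_of_subset (Finset.subset_univ VP), Finset.card_univ, Fintype.card_fin, hVPcard]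
      rwa [h2] at h1
    have hstrict : (n - L - 1).choose (r - 1) < C :=
      choose_strict_mono' (by omega) (by omega) (by omega)
    have h8 := hdeg w
    have h9 : (E.filter (fun s => w ∈ s)).card ≤
        UC.card + (E.filter (fun s => w ∈ s ∧ ∀ x ∈ s, x ∉ VP)).card :=
      le_trans (Finset.card_le_card hsub) (Finset.card_union_le _ _)
    omega
  obtain ⟨f, hfE, hwf, hfUC, x, hxf, hxVP⟩ := key
  obtain ⟨t, ht, rfl⟩ : ∃ t, t < L ∧ x = cv t := by
    rw [← himg, Finset.mem_image] at hxVP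
    obtain ⟨t, ht, hxt⟩ := hxVP
    exact ⟨t, Finset.mem_range.1 ht, hxt.symm⟩
  exact hmax _ _ (cycle_to_path hBC hL1 hfE hwf hfUC hwcv ht hxf)

/-- A Hamilton Berge cycle in an `r`-uniform hypergraph on vertex set `Fin n`
with edge set `E`: a cyclic alternating sequence of `n` distinct vertices and
`n` pairwise distinct hyperedges, with each consecutive pair of vertices
(cyclically) contained in the corresponding hyperedge. -/
def IsHamBergeCycle (n : ℕ) [NeZero n] (E : Finset (Finset (Fin n)))
    (v : Fin n → Fin n) (e : Fin n → Finset (Fin n)) : Prop :=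
  Function.Bijective v ∧ Function.Injective e ∧ (∀ i, e i ∈ E) ∧
    ∀ i : Fin n, v i ∈ e i ∧ v (i + 1) ∈ e i

theorem stmt1 (r n : ℕ) [NeZero n] (hr : 3 ≤ r) (hn : 2 * r - 2 < n)
    (E : Finset (Finset (Fin n))) (hE : ∀ s ∈ E, s.card = r)
    (hdeg : ∀ x : Fin n,
      (((n + 1) / 2 - 1).choose (r - 1)) + (n - 1) ≤ (E.filter (fun s => x ∈ s)).card) :
    ∃ v e, IsHamBergeCycle n E v e := by
  obtain ⟨cv, ce, hvinj, heinj, hmem⟩ := main_cycle hr hn E hE hdeg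
  have h5 : 5 ≤ n := by omega
  refine ⟨fun i => cv i.val, fun i => ce i.val, ?_, ?_, ?_, ?_⟩
  · have hinj : Function.Injective (fun i : Fin n => cv i.val) := by
      intro i j hij
      exact Fin.ext (hvinj i.val i.isLt j.val j.isLt hij)
    exact Finite.injective_iff_bijective.1 hinj
  · intro i j hij
    exact Fin.ext (heinj i.val i.isLt j.val j.isLt hij)
  · intro i
    exact (hmem i.val i.isLt).1
  · intro i
    refine ⟨(hmem i.val i.isLt).2.1, ?_⟩
    have h1 : ((i + 1 : Fin n)).val = (i.val + 1) % n := by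
      rw [Fin.val_add, Fin.val_one']
      rw [Nat.mod_eq_of_lt (by omega : 1 < n)]
    show cv ((i + 1 : Fin n)).val ∈ ce i.val
    rw [h1]
    exact (hmem i.val i.isLt).2.2
end

section
/- Let A be a u-absorber with cycle C of length 2t+1 and vertex sequence (u, v₁, …, v_{t+1}, …, v_{2t}), and Berge paths P₁, …, P_{t−1} where Pᵢ joins v_{i+1} to v_{2t+1−i}, all edge sets disjoint and inner vertex sets of the paths pairwise disjoint. Then A contains two Berge paths from v₁ to v_{t+1}: one whose inner vertex set is V*(C) ∪ ⋃ᵢ V*(Pᵢ), and one whose inner vertex set is (V*(C) \ {u}) ∪ ⋃ᵢ V*(Pᵢ). -/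
open Finset

/-- A Berge path of length `k`. -/
def IsBergePath (n : ℕ) (E : Finset (Finset (Fin n))) (k : ℕ)
    (v : Fin (k + 1) → Fin n) (e : Fin k → Finset (Fin n)) : Prop :=
  Function.Injective v ∧ Function.Injective e ∧ (∀ i, e i ∈ E) ∧
    ∀ i : Fin k, v i.castSucc ∈ e i ∧ v i.succ ∈ e i

/-- A Berge cycle on `k` vertices. -/
def IsBergeCycle (n : ℕ) (E : Finset (Finset (Fin n))) (k : ℕ) [NeZero k]
    (v : Fin k → Fin n) (e : Fin k → Finset (Fin n)) : Prop :=
  Function.Injective v ∧ Function.Injective e ∧ (∀ i, e i ∈ E) ∧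
    ∀ i : Fin k, v i ∈ e i ∧ v (i + 1) ∈ e i



section LChain
variable {α : Type*}

def LChain : List α → List (Finset α) → Prop
  | [_], [] => True
  | a :: b :: V, e :: Es => a ∈ e ∧ b ∈ e ∧ LChain (b :: V) Es
  | _, _ => False

lemma LChain.length : ∀ {V : List α} {Es}, LChain V Es → V.length = Es.length + 1
  | [_], [], _ => rfl
  | _ :: b :: V, _ :: Es, h => by
      have := LChain.length (V := b :: V) h.2.2; simpa using this
  | [], [], h => h.elim
  | [], _ :: _, h => h.elim
  | [_], _ :: _, h => h.elim
  | _ :: _ :: _, [], h => h.elim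

lemma LChain.ne_nil {V : List α} {Es} (h : LChain V Es) : V ≠ [] := by
  intro hV; subst hV; exact absurd h.length (by simp)

lemma LChain.getElem : ∀ {V : List α} {Es}, LChain V Es → ∀ i (hE : i < Es.length)
    (h1 : i < V.length) (h2 : i + 1 < V.length), V[i] ∈ Es[i] ∧ V[i+1] ∈ Es[i]
  | a :: b :: V, e :: Es, h, 0, _, _, _ => ⟨h.1, h.2.1⟩
  | a :: b :: V, e :: Es, h, (m+1), hE, h1, h2 => by
      have := LChain.getElem h.2.2 m (by simpa using hE) (by simpa using h1)
        (by simpa using h2)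
      simpa using this
  | [_], [], h, i, hE, _, _ => absurd hE (by simp)
  | [], [], h, _, _, _, _ => h.elim
  | [], _ :: _, h, _, _, _, _ => h.elim
  | [_], _ :: _, h, _, _, _, _ => h.elim
  | _ :: _ :: _, [], h, i, hE, _, _ => absurd hE (by simp)

lemma LChain.append : ∀ {V1 : List α} {E1 V2 E2 e}, LChain V1 E1 → LChain V2 E2 →
    (∀ x, V1.getLast? = some x → x ∈ e) → (∀ y, V2.head? = some y → y ∈ e) →
    LChain (V1 ++ V2) (E1 ++ e :: E2)
  | [a], [], V2, E2, e, _, h2, hl, hh => by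
      match V2, h2.ne_nil with
      | y :: V2', _ =>
        exact ⟨hl a rfl, hh y rfl, h2⟩
  | a :: b :: V, f :: Es, V2, E2, e, h1, h2, hl, hh => by
      refine ⟨h1.1, h1.2.1, ?_⟩
      exact LChain.append h1.2.2 h2 (fun x hx => hl x (by rw [← hx]; simp)) hh
  | [], [], _, _, _, h, _, _, _ => h.elim
  | [], _ :: _, _, _, _, h, _, _, _ => h.elim
  | [_], _ :: _, _, _, _, h, _, _, _ => h.elim
  | _ :: _ :: _, [], _, _, _, h, _, _, _ => h.elim

lemma LChain.reverse : ∀ {V : List α} {Es}, LChain V Es → LChain V.reverse Es.reverse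
  | [a], [], _ => trivial
  | a :: b :: V, e :: Es, h => by
      have ih := LChain.reverse h.2.2
      have : (a :: b :: V).reverse = (b :: V).reverse ++ [a] := by simp
      rw [this]
      have : (e :: Es).reverse = Es.reverse ++ e :: [] := by simp
      rw [this]
      refine LChain.append ih (by trivial) ?_ ?_
      · intro x hx
        rw [List.getLast?_reverse] at hx
        simp at hx; subst hx; exact h.2.1
      · intro y hy; simp at hy; subst hy; exact h.1
  | [], [], h => h.elim
  | [], _ :: _, h => h.elim
  | [_], _ :: _, h => h.elim
  | _ :: _ :: _, [], h => h.elim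

lemma LChain.cons {a : α} {e V Es} (h : LChain V Es) (ha : a ∈ e)
    (hh : ∀ y, V.head? = some y → y ∈ e) : LChain (a :: V) (e :: Es) := by
  match V, h.ne_nil with
  | b :: V', _ => exact ⟨ha, hh b rfl, h⟩

lemma lchain_ofFn : ∀ {m : ℕ} (v : Fin (m+1) → α) (e : Fin m → Finset α),
    (∀ i : Fin m, v i.castSucc ∈ e i ∧ v i.succ ∈ e i) →
    LChain (List.ofFn v) (List.ofFn e)
  | 0, v, e, h => by simp [LChain]
  | (m+1), v, e, h => by
    rw [List.ofFn_succ, List.ofFn_succ (f := e)]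
    refine LChain.cons (lchain_ofFn _ _ (fun i => ?_)) ?_ ?_
    · constructor
      · have := (h i.succ).1
        exact this
      · exact (h i.succ).2
    · simpa using (h 0).1
    · intro y hy
      rw [List.ofFn_succ] at hy
      simp only [List.head?_cons, Option.some_inj] at hy
      subst hy
      exact (h 0).2

lemma lchain_flatten (z : α) : ∀ (L : List (List α × List (Finset α) × Finset α)),
    (∀ s ∈ L, LChain s.1 s.2.1 ∧ (∀ x, s.1.getLast? = some x → x ∈ s.2.2)) →
    (∀ i (hi : i + 1 < L.length), ∀ y, L[i+1].1.head? = some y → y ∈ L[i].2.2) →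
    (∀ x, L.getLast? = some x → z ∈ x.2.2) →
    LChain ((L.map Prod.fst).flatten ++ [z]) ((L.map fun s => s.2.1 ++ [s.2.2]).flatten)
  | [], _, _, _ => by simp [LChain]
  | s :: L', hseg, hlink, hlast => by
      have ih := lchain_flatten z L' (fun x hx => hseg x (List.mem_cons_of_mem _ hx))
        (fun i hi y hy => by
          have := hlink (i+1) (by simpa using hi) y (by simpa using hy)
          simpa using this)
        (fun x hx => hlast x (by
          match L' with
          | [] => simp at hx
          | s' :: L'' => rw [List.getLast?_cons_cons]; exact hx))
      have h1 := (hseg s (by simp)).1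
      have hV : (List.map Prod.fst (s :: L')).flatten ++ [z]
          = s.1 ++ ((List.map Prod.fst L').flatten ++ [z]) := by
        simp
      have hEs : (List.map (fun s => s.2.1 ++ [s.2.2]) (s :: L')).flatten
          = s.2.1 ++ (s.2.2 :: (List.map (fun s => s.2.1 ++ [s.2.2]) L').flatten) := by
        simp
      rw [hV, hEs]
      refine LChain.append h1 ih ((hseg s (by simp)).2) ?_
      intro y hy
      cases L' with
      | nil =>
        simp only [List.map_nil, List.flatten_nil, List.nil_append, List.head?_cons,
          Option.some_inj] at hy
        subst hy
        exact hlast s rfl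
      | cons s' L'' =>
        have hne : s'.1 ≠ [] := ((hseg s' (by simp)).1).ne_nil
        apply hlink 0 (by simp) y
        simp only [List.getElem_cons_succ, List.getElem_cons_zero]
        simp only [List.map_cons, List.flatten_cons, List.append_assoc] at hy
        rw [List.head?_append, List.head?_eq_head hne] at hy
        rw [show ∀ o : Option α, (some (s'.1.head hne)).or o = some (s'.1.head hne) from fun o => rfl] at hy
        rw [List.head?_eq_head hne]
        exact hy

lemma getLast?_ofFn' {m : ℕ} (v : Fin (m+1) → α) :
    (List.ofFn v).getLast? = some (v (Fin.last m)) := by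
  rw [List.getLast?_eq_getElem?]
  rw [List.getElem?_eq_getElem (by simp)]
  simp only [List.length_ofFn, Nat.add_sub_cancel, List.getElem_ofFn, Option.some_inj]
  congr 1

lemma head?_ofFn' {m : ℕ} (v : Fin (m+1) → α) :
    (List.ofFn v).head? = some (v 0) := by
  rw [List.ofFn_succ]; rfl

end LChain

lemma master (n t : ℕ) (ht : 1 ≤ t)
    (E : Finset (Finset (Fin n)))
    (w : Fin (2 * t + 1) → Fin n) (c : Fin (2 * t + 1) → Finset (Fin n))
    (hC : IsBergeCycle n E (2 * t + 1) w c)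
    (k : Fin (t - 1) → ℕ)
    (p : (j : Fin (t - 1)) → Fin (k j + 1) → Fin n)
    (q : (j : Fin (t - 1)) → Fin (k j) → Finset (Fin n))
    (hP : ∀ j, IsBergePath n E (k j) (p j) (q j))
    (hends : ∀ j : Fin (t - 1),
      p j 0 = w ⟨j.val + 2, by have := j.isLt; omega⟩ ∧
      p j (Fin.last (k j)) = w ⟨2 * t - j.val, by omega⟩)
    (hinnerdisj : ∀ j j' : Fin (t - 1), j ≠ j' → ∀ a b, p j a ≠ p j' b)
    (hcycdisj : ∀ j : Fin (t - 1), ∀ a : Fin (k j + 1), ∀ b,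
      p j a = w b → a = 0 ∨ a = Fin.last (k j))
    (hedgedisj₁ : ∀ j a b, q j a ≠ c b)
    (hedgedisj₂ : ∀ j j' : Fin (t - 1), j ≠ j' → ∀ a b, q j a ≠ q j' b)
    (b : Bool) :
    ∃ (K : ℕ) (P : Fin (K + 1) → Fin n) (Q : Fin K → Finset (Fin n)),
      IsBergePath n E K P Q ∧
      P 0 = w ⟨1, by omega⟩ ∧ P (Fin.last K) = w ⟨t + 1, by omega⟩ ∧
      (∀ i, Q i ∈ Set.range c ∪ ⋃ j, Set.range (q j)) ∧
      Set.range P =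
        (if b then Set.range w \ {w 0} else Set.range w) ∪ ⋃ j, Set.range (p j) := by
  classical
  obtain ⟨hwinj, hcinj, hcE, hcyc⟩ := hC
  have hN : 0 < 2 * t + 1 := by omega
  set W : ℕ → Fin n := fun i => w ⟨i % (2*t+1), Nat.mod_lt _ hN⟩ with hWdef
  set Cc : ℕ → Finset (Fin n) := fun i => c ⟨i % (2*t+1), Nat.mod_lt _ hN⟩ with hCcdef
  set bit : ℕ := if b then 1 else 0 with hbitdef
  have hbit : bit ≤ 1 := by cases b <;> simp [hbitdef]
  -- basic facts about W and Cc
  have hWmem : ∀ i, W i ∈ Cc i ∧ W (i+1) ∈ Cc i := by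
    intro i
    have h := hcyc ⟨i % (2*t+1), Nat.mod_lt _ hN⟩
    refine ⟨h.1, ?_⟩
    have he : (⟨(i+1) % (2*t+1), Nat.mod_lt _ hN⟩ : Fin (2*t+1)) =
        ⟨i % (2*t+1), Nat.mod_lt _ hN⟩ + 1 := by
      apply Fin.ext
      simp only [Fin.add_def]
      rw [Fin.val_one']
      conv_lhs => rw [Nat.add_mod]
    show w ⟨(i+1) % (2*t+1), Nat.mod_lt _ hN⟩ ∈ _
    rw [he]
    exact h.2
  have hWinj : ∀ i, i ≤ 2*t → ∀ i', i' ≤ 2*t → W i = W i' → i = i' := by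
    intro i hi i' hi' h
    have h2 := congrArg Fin.val (hwinj h)
    simpa [Nat.mod_eq_of_lt (by omega : i < 2*t+1),
      Nat.mod_eq_of_lt (by omega : i' < 2*t+1)] using h2
  have hCcinj : ∀ i, i ≤ 2*t → ∀ i', i' ≤ 2*t → Cc i = Cc i' → i = i' := by
    intro i hi i' hi' h
    have h2 := congrArg Fin.val (hcinj h)
    simpa [Nat.mod_eq_of_lt (by omega : i < 2*t+1),
      Nat.mod_eq_of_lt (by omega : i' < 2*t+1)] using h2
  have hqCc : ∀ (j : Fin (t-1)) a i, q j a ≠ Cc i := fun j a i => hedgedisj₁ j a _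
  have ht2 : ∀ j : Fin (t-1), j.val + 2 ≤ t := fun j => by have := j.isLt; omega
  have hp0 : ∀ j : Fin (t-1), p j 0 = W (j.val + 2) := by
    intro j
    rw [(hends j).1]
    congr 1
    apply Fin.ext
    simp [Nat.mod_eq_of_lt (by have := ht2 j; omega : j.val + 2 < 2*t+1)]
  have hpl : ∀ j : Fin (t-1), p j (Fin.last (k j)) = W (2*t - j.val) := by
    intro j
    rw [(hends j).2]
    congr 1
    apply Fin.ext
    simp [Nat.mod_eq_of_lt (by omega : 2*t - j.val < 2*t+1)]
  have hpw : ∀ (j : Fin (t-1)) a (m : ℕ), m ≤ 2*t → p j a = W m →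
      m = j.val + 2 ∨ m = 2*t - j.val := by
    intro j a m hm h
    rcases hcycdisj j a ⟨m % (2*t+1), Nat.mod_lt _ hN⟩ h with h0 | h0
    · left
      subst h0
      rw [hp0 j] at h
      exact (hWinj _ (by have := ht2 j; omega) _ hm h).symm
    · right
      subst h0
      rw [hpl j] at h
      exact (hWinj _ (by omega) _ hm h).symm
  have hWp : ∀ (m : ℕ), m ≤ 2*t → (m ≤ 1 ∨ m = t+1) → ∀ (j : Fin (t-1)) a, p j a ≠ W m := by
    intro m hm hc j a h
    rcases hpw j a m hm h with h'|h' <;> (have := ht2 j; omega)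
  -- the segments
  set seg : Fin (t-1) → List (Fin n) × List (Finset (Fin n)) × Finset (Fin n) := fun j =>
    if j.val % 2 = bit then
      ((List.ofFn (p j)).reverse, (List.ofFn (q j)).reverse, Cc (j.val + 2))
    else
      (List.ofFn (p j), List.ofFn (q j), Cc (2*t - j.val - 1)) with hsegdef
  set pre : List (Fin n) × List (Finset (Fin n)) × Finset (Fin n) :=
    if b then ([W 1], [], Cc 1) else ([W 1, W 0], [Cc 0], Cc (2*t)) with hpredef
  set L := pre :: List.ofFn seg with hLdef
  set Vl := (L.map Prod.fst).flatten ++ [W (t+1)] with hVldef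
  set El := (L.map fun s => s.2.1 ++ [s.2.2]).flatten with hEldef
  -- membership in segments
  have hsegmemV : ∀ (j : Fin (t-1)) x, x ∈ (seg j).1 ↔ ∃ a, p j a = x := by
    intro j x
    by_cases hpar : j.val % 2 = bit <;>
      simp only [hsegdef, hpar, if_true, if_false, List.mem_reverse, List.mem_ofFn,
        Set.mem_range]
  have hsegmemE : ∀ (j : Fin (t-1)) e, e ∈ (seg j).2.1 ↔ ∃ a, q j a = e := by
    intro j e
    by_cases hpar : j.val % 2 = bit <;>
      simp only [hsegdef, hpar, if_true, if_false, List.mem_reverse, List.mem_ofFn,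
        Set.mem_range]
  have hsegconn : ∀ j : Fin (t-1),
      (seg j).2.2 = Cc (if j.val % 2 = bit then j.val + 2 else 2*t - j.val - 1) := by
    intro j
    by_cases hpar : j.val % 2 = bit <;> simp [hsegdef, hpar]
  have hprememV : ∀ x, x ∈ pre.1 ↔ x = W 1 ∨ (b = false ∧ x = W 0) := by
    intro x; cases b <;> simp [hpredef]
  -- the chain
  have hWshift : ∀ m m' : ℕ, m = m' → W m = W m' := fun m m' h => by rw [h]
  have hchain : LChain Vl El := by
    rw [hVldef, hEldef]
    apply lchain_flatten
    · intro s hs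
      rw [hLdef, List.mem_cons] at hs
      rcases hs with rfl | hs
      · cases b with
        | false =>
          simp only [hpredef, if_neg (Bool.false_ne_true)]
          refine ⟨⟨(hWmem 0).2, (hWmem 0).1, trivial⟩, ?_⟩
          intro x hx
          simp only [List.getLast?_cons_cons, List.getLast?_singleton,
            Option.some_inj] at hx
          subst hx
          have h := (hWmem (2*t)).2
          rwa [show W (2*t+1) = W 0 by simp [hWdef, Nat.mod_self]] at h
        | true =>
          simp only [hpredef, if_pos rfl]
          refine ⟨trivial, ?_⟩
          intro x hx
          obtain rfl : W 1 = x := by simpa using hx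
          exact (hWmem 1).1
      · rw [List.mem_ofFn] at hs
        obtain ⟨j, rfl⟩ := hs
        by_cases hpar : j.val % 2 = bit
        · constructor
          · show LChain (seg j).1 (seg j).2.1
            simp only [hsegdef, hpar, if_true]
            exact (lchain_ofFn _ _ (hP j).2.2.2).reverse
          · intro x hx
            simp only [hsegdef, hpar, if_true] at hx ⊢
            rw [List.getLast?_reverse, head?_ofFn', Option.some_inj] at hx
            subst hx
            rw [hp0 j]
            exact (hWmem (j.val+2)).1
        · constructor
          · show LChain (seg j).1 (seg j).2.1
            simp only [hsegdef, hpar, if_false]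
            exact lchain_ofFn _ _ (hP j).2.2.2
          · intro x hx
            simp only [hsegdef, hpar, if_false] at hx ⊢
            rw [getLast?_ofFn', Option.some_inj] at hx
            subst hx
            rw [hpl j, hWshift (2*t - j.val) (2*t - j.val - 1 + 1) (by have := ht2 j; omega)]
            exact (hWmem (2*t - j.val - 1)).2
    · intro i hi y hy
      have hilt : i < t - 1 := by
        simpa [hLdef] using hi
      simp only [hLdef, List.getElem_cons_succ, List.getElem_ofFn] at hy
      rcases i with _ | i'
      all_goals simp only [hLdef, List.getElem_cons_zero, List.getElem_cons_succ,
        List.getElem_ofFn]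
      · cases b with
        | false =>
          have hpar : (0:ℕ) % 2 = bit := by simp [hbitdef]
          simp only [hsegdef, hpar, Fin.val_mk, if_true] at hy
          rw [List.head?_reverse, getLast?_ofFn', Option.some_inj] at hy
          subst hy
          rw [hpl]
          simp only [hpredef, if_neg (Bool.false_ne_true)]
          show W (2*t - 0) ∈ Cc (2*t)
          rw [hWshift (2*t - 0) (2*t) (by omega)]
          exact (hWmem (2*t)).1
        | true =>
          have hpar : ¬ ((0:ℕ) % 2 = bit) := by simp [hbitdef]
          simp only [hsegdef, hpar, Fin.val_mk, if_false] at hy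
          rw [head?_ofFn', Option.some_inj] at hy
          subst hy
          rw [hp0]
          simp only [hpredef, if_pos rfl]
          show W (0 + 2) ∈ Cc 1
          exact (hWmem 1).2
      · rw [hsegconn]
        by_cases hpar : i' % 2 = bit
        · have hpar2 : ¬ ((i'+1) % 2 = bit) := by omega
          simp only [hsegdef, hpar2, Fin.val_mk, if_false] at hy
          rw [head?_ofFn', Option.some_inj] at hy
          subst hy
          rw [hp0]
          simp only [Fin.val_mk, hpar, if_true]
          rw [hWshift (i'+1+2) (i'+2+1) (by omega)]
          exact (hWmem (i'+2)).2
        · have hpar2 : (i'+1) % 2 = bit := by omega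
          simp only [hsegdef, hpar2, Fin.val_mk, if_true] at hy
          rw [List.head?_reverse, getLast?_ofFn', Option.some_inj] at hy
          subst hy
          rw [hpl]
          simp only [Fin.val_mk, hpar, if_false]
          rw [hWshift (2*t - (i'+1)) (2*t - i' - 1) (by omega)]
          exact (hWmem (2*t - i' - 1)).1
    · intro x hx
      rw [hLdef] at hx
      by_cases ht1 : t - 1 = 0
      · have hnil : List.ofFn seg = [] :=
          List.eq_nil_of_length_eq_zero (by simp [ht1])
        rw [hnil, List.getLast?_singleton, Option.some_inj] at hx
        subst hx
        rw [hpredef]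
        cases b with
        | false =>
          simp only [if_neg (Bool.false_ne_true)]
          show W (t+1) ∈ Cc (2*t)
          rw [hWshift (t+1) (2*t) (by omega)]
          exact (hWmem (2*t)).1
        | true =>
          simp only [if_pos rfl]
          show W (t+1) ∈ Cc 1
          rw [hWshift (t+1) (1+1) (by omega)]
          exact (hWmem 1).2
      · rw [List.getLast?_eq_getElem?] at hx
        have hlenL : (pre :: List.ofFn seg).length - 1 = (t-2) + 1 := by
          simp; omega
        rw [hlenL, List.getElem?_cons_succ,
          List.getElem?_eq_getElem (by simp; omega), Option.some_inj] at hx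
        rw [List.getElem_ofFn] at hx
        subst hx
        rw [hsegconn]
        by_cases hpar : (⟨t-2, by omega⟩ : Fin (t-1)).val % 2 = bit
        · simp only [hpar, if_true, Fin.val_mk]
          rw [hWshift (t+1) ((t-2) + 2 + 1) (by omega)]
          exact (hWmem ((t-2)+2)).2
        · simp only [hpar, if_false, Fin.val_mk]
          rw [hWshift (t+1) (2*t - (t-2) - 1) (by omega)]
          exact (hWmem (2*t - (t-2) - 1)).1
  have hlen : Vl.length = El.length + 1 := hchain.length
  have hW10 : W 1 ≠ W 0 := fun h => by have := hWinj 1 (by omega) 0 (by omega) h; omega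
  have hWt1 : ∀ m, m ≤ 1 → W (t+1) ≠ W m := fun m hm h => by
    have := hWinj (t+1) (by omega) m (by omega) h; omega
  have hmidV : ∀ x, x ∈ (List.ofFn (Prod.fst ∘ seg)).flatten ↔ ∃ j a, p j a = x := by
    intro x
    rw [List.mem_flatten]
    constructor
    · rintro ⟨l, hl, hxl⟩
      rw [List.mem_ofFn] at hl
      obtain ⟨j, rfl⟩ := hl
      obtain ⟨a, ha⟩ := (hsegmemV j x).1 hxl
      exact ⟨j, a, ha⟩
    · rintro ⟨j, a, rfl⟩
      exact ⟨(seg j).1, List.mem_ofFn.2 ⟨j, rfl⟩, (hsegmemV j _).2 ⟨a, rfl⟩⟩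
  have hidxbound : ∀ j : Fin (t-1),
      2 ≤ (if j.val % 2 = bit then j.val + 2 else 2*t - j.val - 1) ∧
      (if j.val % 2 = bit then j.val + 2 else 2*t - j.val - 1) ≤ 2*t - 1 := by
    intro j
    have := ht2 j
    split <;> omega
  have hidxne : ∀ j j' : Fin (t-1), j ≠ j' →
      (if j.val % 2 = bit then j.val + 2 else 2*t - j.val - 1) ≠
      (if j'.val % 2 = bit then j'.val + 2 else 2*t - j'.val - 1) := by
    intro j j' hne
    have h1 := ht2 j
    have h2 := ht2 j'
    have h3 : j.val ≠ j'.val := fun h => hne (Fin.ext h)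
    split <;> split <;> omega
  have hpreE : ∀ e, e ∈ pre.2.1 ++ [pre.2.2] ↔
      (b = false ∧ (e = Cc 0 ∨ e = Cc (2*t))) ∨ (b = true ∧ e = Cc 1) := by
    intro e
    cases b <;> simp [hpredef]
  have hnodupV : Vl.Nodup := by
    rw [hVldef, hLdef]
    simp only [List.map_cons, List.flatten_cons, List.map_ofFn, List.append_assoc]
    rw [List.nodup_append]
    refine ⟨?_, ?_, ?_⟩
    · cases b <;> simp [hpredef, hW10]
    · rw [List.nodup_append]
      refine ⟨?_, List.nodup_singleton _, ?_⟩
      · rw [List.nodup_flatten]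
        constructor
        · intro l hl
          rw [List.mem_ofFn] at hl
          obtain ⟨j, rfl⟩ := hl
          show ((seg j).1).Nodup
          by_cases hpar : j.val % 2 = bit <;>
            simp only [hsegdef, hpar, if_true, if_false, List.nodup_reverse] <;>
            exact List.nodup_ofFn.2 (hP j).1
        · rw [List.pairwise_ofFn]
          intro i j hij x hxi hxj
          obtain ⟨a, ha⟩ := (hsegmemV i x).1 hxi
          obtain ⟨a', ha'⟩ := (hsegmemV j x).1 hxj
          exact hinnerdisj i j (Fin.ne_of_lt hij) a a' (by rw [ha, ha'])
      · intro x hx x' hx' hxx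
        rw [← hxx] at hx'
        rw [List.mem_singleton] at hx'
        subst hx'
        obtain ⟨j, a, ha⟩ := (hmidV _).1 hx
        exact hWp (t+1) (by omega) (Or.inr rfl) j a ha
    · intro x hx x' hmem hxx
      rw [← hxx] at hmem
      rcases (hprememV x).1 hx with rfl | ⟨hb, rfl⟩
      · rcases List.mem_append.1 hmem with h | h
        · obtain ⟨j, a, ha⟩ := (hmidV _).1 h
          exact hWp 1 (by omega) (Or.inl (by omega)) j a ha
        · rw [List.mem_singleton] at h
          exact hWt1 1 (by omega) h.symm
      · rcases List.mem_append.1 hmem with h | h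
        · obtain ⟨j, a, ha⟩ := (hmidV _).1 h
          exact hWp 0 (by omega) (Or.inl (by omega)) j a ha
        · rw [List.mem_singleton] at h
          exact hWt1 0 (by omega) h.symm
  have hnodupE : El.Nodup := by
    rw [hEldef, hLdef]
    simp only [List.map_cons, List.map_ofFn]
    rw [List.nodup_flatten]
    constructor
    · intro l hl
      rcases List.mem_cons.1 hl with rfl | hl
      · cases b with
        | false =>
          simp only [hpredef, if_neg (Bool.false_ne_true)]
          simp only [List.cons_append, List.nil_append]
          refine List.nodup_cons.2 ⟨?_, List.nodup_singleton _⟩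
          intro h
          rw [List.mem_singleton] at h
          have := hCcinj 0 (by omega) (2*t) (by omega) h
          omega
        | true =>
          simp [hpredef]
      · rw [List.mem_ofFn] at hl
        obtain ⟨j, rfl⟩ := hl
        show ((seg j).2.1 ++ [(seg j).2.2]).Nodup
        rw [List.nodup_append]
        refine ⟨?_, List.nodup_singleton _, ?_⟩
        · by_cases hpar : j.val % 2 = bit <;>
            simp only [hsegdef, hpar, if_true, if_false, List.nodup_reverse] <;>
            exact List.nodup_ofFn.2 (hP j).2.1
        · intro e he e' he' hee
          rw [← hee] at he'
          rw [List.mem_singleton] at he'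
          subst he'
          obtain ⟨a, ha⟩ := (hsegmemE j _).1 he
          rw [hsegconn j] at ha
          exact hqCc j a _ ha
    · rw [List.pairwise_cons]
      constructor
      · intro l hl e he he'
        rw [List.mem_ofFn] at hl
        obtain ⟨j, rfl⟩ := hl
        have hpe := (hpreE e).1 he
        rcases List.mem_append.1 he' with h | h
        · obtain ⟨a, ha⟩ := (hsegmemE j _).1 h
          rcases hpe with ⟨_, h'|h'⟩ | ⟨_, h'⟩ <;> (subst h'; exact hqCc j a _ ha)
        · rw [List.mem_singleton] at h
          subst h
          rw [hsegconn j] at hpe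
          have hb := hidxbound j
          rcases hpe with ⟨_, h'|h'⟩ | ⟨_, h'⟩
          · have := hCcinj _ (by omega) 0 (by omega) h'
            omega
          · have := hCcinj _ (by omega) (2*t) (by omega) h'
            omega
          · have := hCcinj _ (by omega) 1 (by omega) h'
            omega
      · rw [List.pairwise_ofFn]
        intro i j hij e hei hej
        have hbi := hidxbound i
        have hbj := hidxbound j
        rcases List.mem_append.1 hei with h | h
        · obtain ⟨a, ha⟩ := (hsegmemE i _).1 h
          rcases List.mem_append.1 hej with h' | h'
          · obtain ⟨a', ha'⟩ := (hsegmemE j _).1 h'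
            exact hedgedisj₂ i j (Fin.ne_of_lt hij) a a' (by rw [ha, ha'])
          · rw [List.mem_singleton] at h'
            subst h'
            rw [hsegconn j] at ha
            exact hqCc i a _ ha
        · rw [List.mem_singleton] at h
          subst h
          rw [hsegconn i] at hej
          rcases List.mem_append.1 hej with h' | h'
          · obtain ⟨a', ha'⟩ := (hsegmemE j _).1 h'
            exact hqCc j a' _ ha' 
          · rw [List.mem_singleton, hsegconn j] at h'
            exact hidxne i j (Fin.ne_of_lt hij)
              (hCcinj _ (by omega) _ (by omega) h')
  -- edge characterization
  have hElchar : ∀ e ∈ El, (∃ i, e = Cc i) ∨ (∃ j a, e = q j a) := by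
    intro e he
    rw [hEldef, hLdef] at he
    simp only [List.map_cons, List.map_ofFn, List.flatten_cons] at he
    rcases List.mem_append.1 he with h | h
    · rcases (hpreE e).1 h with ⟨_, h'|h'⟩ | ⟨_, h'⟩ <;> exact Or.inl ⟨_, h'⟩
    · rw [List.mem_flatten] at h
      obtain ⟨l, hl, hel⟩ := h
      rw [List.mem_ofFn] at hl
      obtain ⟨j, rfl⟩ := hl
      rcases List.mem_append.1 hel with h' | h'
      · obtain ⟨a, ha⟩ := (hsegmemE j _).1 h'
        exact Or.inr ⟨j, a, ha.symm⟩
      · rw [List.mem_singleton, hsegconn j] at h'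
        exact Or.inl ⟨_, h'⟩
  -- vertex characterization
  have hVlchar : ∀ x, x ∈ Vl ↔ (x ∈ pre.1 ∨ (∃ j a, p j a = x) ∨ x = W (t+1)) := by
    intro x
    rw [hVldef, hLdef]
    simp only [List.map_cons, List.flatten_cons, List.map_ofFn, List.append_assoc,
      List.mem_append, List.mem_singleton]
    rw [hmidV x]
  -- assemble
  have hWw : ∀ (m : ℕ) (hm : m < 2*t+1), W m = w ⟨m, hm⟩ := by
    intro m hm
    show w _ = w _
    congr 1
    exact Fin.ext (by simp [Nat.mod_eq_of_lt hm])
  have hAlen : ((L.map Prod.fst).flatten).length = El.length := by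
    have h := hlen
    rw [hVldef] at h
    simp only [List.length_append, List.length_singleton] at h
    omega
  have hw0W : w 0 = W 0 := congrArg w (Fin.ext (by simp))
  refine ⟨El.length, fun i => Vl[i.val]'(by omega), fun i => El[i.val]'(i.isLt),
    ⟨?_, ?_, ?_, ?_⟩, ?_, ?_, ?_, ?_⟩
  · -- injective P
    intro i i' h
    have h2 : (⟨i.val, by omega⟩ : Fin Vl.length) = ⟨i'.val, by omega⟩ :=
      List.nodup_iff_injective_getElem.1 hnodupV h
    exact Fin.ext (by simpa using congrArg Fin.val h2)
  · -- injective Q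
    intro i i' h
    have h2 : (⟨i.val, i.isLt⟩ : Fin El.length) = ⟨i'.val, i'.isLt⟩ :=
      List.nodup_iff_injective_getElem.1 hnodupE h
    exact Fin.ext (by simpa using congrArg Fin.val h2)
  · -- edges in E
    intro i
    show El[(i : ℕ)]'i.isLt ∈ E
    rcases hElchar (El[(i : ℕ)]'i.isLt) (List.getElem_mem _) with ⟨i', h⟩ | ⟨j, a, h⟩
    · rw [h]; exact hcE _
    · rw [h]; exact (hP j).2.2.1 a
  · -- adjacency
    intro i
    exact hchain.getElem i.val i.isLt (by omega) (by omega)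
  · -- start
    show Vl[(0 : ℕ)]'(by omega) = _
    refine Eq.trans ?_ (hWw 1 (by omega))
    simp only [hVldef, hLdef]
    cases b <;> simp [hpredef]
  · -- end
    show Vl[El.length]'(by omega) = _
    refine Eq.trans ?_ (hWw (t+1) (by omega))
    simp only [hVldef]
    rw [List.getElem_append_right (by omega)]
    simp [hAlen]
  · -- edges in range
    intro i
    rcases hElchar (El[(i : ℕ)]'i.isLt) (List.getElem_mem _) with ⟨i', h⟩ | ⟨j, a, h⟩
    · exact Or.inl ⟨_, h.symm⟩
    · exact Or.inr (Set.mem_iUnion.2 ⟨j, ⟨a, h.symm⟩⟩)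
  · -- range
    ext x
    simp only [Set.mem_range]
    rw [Set.mem_union]
    constructor
    · rintro ⟨i, rfl⟩
      show (Vl[(i : ℕ)]'(by omega) ∈ _) ∨ Vl[(i : ℕ)]'(by omega) ∈ _
      rcases (hVlchar (Vl[(i : ℕ)]'(by omega))).1 (List.getElem_mem _) with
        hx | ⟨j, a, ha⟩ | hx
      · rcases (hprememV _).1 hx with h1 | ⟨hb, h1⟩
        · rw [h1]
          left
          cases b with
          | false => exact ⟨⟨1 % (2*t+1), Nat.mod_lt _ hN⟩, rfl⟩
          | true =>
            refine ⟨⟨⟨1 % (2*t+1), Nat.mod_lt _ hN⟩, rfl⟩, ?_⟩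
            intro hmem
            rw [Set.mem_singleton_iff, hw0W] at hmem
            exact hW10 hmem
        · rw [h1, hb]
          simp only [if_neg (Bool.false_ne_true)]
          exact Or.inl ⟨⟨0 % (2*t+1), Nat.mod_lt _ hN⟩, rfl⟩
      · exact Or.inr (Set.mem_iUnion.2 ⟨j, ⟨a, ha⟩⟩)
      · rw [hx]
        left
        cases b with
        | false => exact ⟨⟨(t+1) % (2*t+1), Nat.mod_lt _ hN⟩, rfl⟩
        | true =>
          refine ⟨⟨⟨(t+1) % (2*t+1), Nat.mod_lt _ hN⟩, rfl⟩, ?_⟩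
          intro hmem
          rw [Set.mem_singleton_iff, hw0W] at hmem
          exact hWt1 0 (by omega) hmem
    · intro hxT
      have hxVl : x ∈ Vl := by
        rw [hVlchar]
        rcases hxT with hx | hx
        · have hxw : (∃ i : Fin (2*t+1), w i = x) ∧ (b = true → x ≠ w 0) := by
            cases b with
            | false =>
              simp only [if_neg (Bool.false_ne_true)] at hx
              exact ⟨hx, fun h => absurd h (by simp)⟩
            | true =>
              simp only [if_pos rfl, Set.mem_diff, Set.mem_singleton_iff] at hx
              exact ⟨hx.1, fun _ => hx.2⟩
          obtain ⟨⟨i, rfl⟩, hb0⟩ := hxw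
          have hm : i.val < 2*t+1 := i.isLt
          have hxW : ∀ m' : ℕ, m' = i.val → w i = W m' := by
            rintro m' rfl
            exact ((hWw i.val hm).trans (congrArg w (Fin.ext rfl))).symm
          rcases show i.val = 0 ∨ i.val = 1 ∨ (2 ≤ i.val ∧ i.val ≤ t) ∨ i.val = t+1 ∨
              (t+2 ≤ i.val ∧ i.val ≤ 2*t) from by omega with
            h0 | h0 | ⟨h1, h2⟩ | h0 | ⟨h1, h2⟩
          · cases b with
            | true =>
              refine absurd ?_ (hb0 rfl)
              refine congrArg w (Fin.ext ?_)
              simpa using h0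
            | false =>
              refine Or.inl ((hprememV _).2 (Or.inr ⟨rfl, ?_⟩))
              rw [hxW 0 h0.symm]
          · refine Or.inl ((hprememV _).2 (Or.inl ?_))
            rw [hxW 1 h0.symm]
          · refine Or.inr (Or.inl ⟨⟨i.val - 2, by omega⟩, 0, ?_⟩)
            rw [hp0 ⟨i.val - 2, by omega⟩]
            rw [hxW i.val rfl]
            exact hWshift _ _ (by show i.val - 2 + 2 = i.val; omega)
          · refine Or.inr (Or.inr ?_)
            rw [hxW (t+1) h0.symm]
          · refine Or.inr (Or.inl ⟨⟨2*t - i.val, by omega⟩, Fin.last _, ?_⟩)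
            rw [hpl ⟨2*t - i.val, by omega⟩]
            rw [hxW i.val rfl]
            exact hWshift _ _ (by show 2*t - (2*t - i.val) = i.val; omega)
        · rw [Set.mem_iUnion] at hx
          obtain ⟨j, a, ha⟩ := hx
          exact Or.inr (Or.inl ⟨j, a, ha⟩)
      obtain ⟨i, hi, hgi⟩ := List.mem_iff_getElem.1 hxVl
      exact ⟨⟨i, by omega⟩, hgi⟩


/-- A `u`-absorber: a Berge cycle `C` of odd length `2t+1` with vertex
sequence `(u = w 0, v₁ = w 1, …, v_{2t} = w 2t)`, together with Berge paths
`P₀, …, P_{t-2}` (0-indexed; `P_j` joins `v_{j+2} = w (j+2)` to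
`v_{2t-j} = w (2t-j)`), with pairwise disjoint inner vertex sets meeting the
cycle only in their endpoints, and all edge sets pairwise disjoint. Then the
absorber contains two Berge paths from `v₁ = w 1` to `v_{t+1} = w (t+1)`:
one whose vertex set is `V*(C) ∪ ⋃ⱼ V*(Pⱼ)` and one whose vertex set is
`(V*(C) \ {u}) ∪ ⋃ⱼ V*(Pⱼ)`, both using only edges of the absorber. -/
theorem stmt10 (r n t : ℕ) (hr : 3 ≤ r) (ht : 1 ≤ t)
    (E : Finset (Finset (Fin n))) (hE : ∀ s ∈ E, s.card = r)
    (u : Fin n)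
    (w : Fin (2 * t + 1) → Fin n) (c : Fin (2 * t + 1) → Finset (Fin n))
    (hC : IsBergeCycle n E (2 * t + 1) w c) (hu : w 0 = u)
    (k : Fin (t - 1) → ℕ)
    (p : (j : Fin (t - 1)) → Fin (k j + 1) → Fin n)
    (q : (j : Fin (t - 1)) → Fin (k j) → Finset (Fin n))
    (hP : ∀ j, IsBergePath n E (k j) (p j) (q j))
    (hends : ∀ j : Fin (t - 1),
      p j 0 = w ⟨j.val + 2, by have := j.isLt; omega⟩ ∧
      p j (Fin.last (k j)) = w ⟨2 * t - j.val, by omega⟩)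
    (hinnerdisj : ∀ j j' : Fin (t - 1), j ≠ j' → ∀ a b, p j a ≠ p j' b)
    (hcycdisj : ∀ j : Fin (t - 1), ∀ a : Fin (k j + 1), ∀ b,
      p j a = w b → a = 0 ∨ a = Fin.last (k j))
    (hedgedisj₁ : ∀ j a b, q j a ≠ c b)
    (hedgedisj₂ : ∀ j j' : Fin (t - 1), j ≠ j' → ∀ a b, q j a ≠ q j' b) :
    (∃ (K : ℕ) (P : Fin (K + 1) → Fin n) (Q : Fin K → Finset (Fin n)),
      IsBergePath n E K P Q ∧
      P 0 = w ⟨1, by omega⟩ ∧ P (Fin.last K) = w ⟨t + 1, by omega⟩ ∧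
      (∀ i, Q i ∈ Set.range c ∪ ⋃ j, Set.range (q j)) ∧
      Set.range P = Set.range w ∪ ⋃ j, Set.range (p j)) ∧
    (∃ (K : ℕ) (P : Fin (K + 1) → Fin n) (Q : Fin K → Finset (Fin n)),
      IsBergePath n E K P Q ∧
      P 0 = w ⟨1, by omega⟩ ∧ P (Fin.last K) = w ⟨t + 1, by omega⟩ ∧
      (∀ i, Q i ∈ Set.range c ∪ ⋃ j, Set.range (q j)) ∧
      Set.range P = (Set.range w \ {u}) ∪ ⋃ j, Set.range (p j)) := by
  constructor
  · have h := master n t ht E w c hC k p q hP hends hinnerdisj hcycdisj hedgedisj₁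
      hedgedisj₂ false
    simpa using h
  · have h := master n t ht E w c hC k p q hP hends hinnerdisj hcycdisj hedgedisj₁
      hedgedisj₂ true
    simpa [hu] using h
end

section
/- Fix r ≥ 3, γ ∈ (0,1) and c > 1, and choose ε ≤ 2^{r−3}γ with 1 + ε < c. Let 𝓗 be an (ε,p)-pseudorandom r-uniform hypergraph on n vertices (n large, p ≥ ln^{cr} n / n^{r−1}), H ⊆ 𝓗, and let U₁, U₂ be disjoint vertex subsets with |U₁| = |U₂| = m ≥ n/ln^c n, such that every vertex of U₁ has at least (2^{1−r} + γ)·p·C(m, r−1) edges of H meeting it in one vertex and U₂ in r−1 vertices, and symmetrically for vertices of U₂ into U₁. Then H contains a (U₁,U₂)-matching. -/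
open Finset

/-- The number of edges of `E` with exactly one vertex in `T` and all other
vertices in `U`. -/
def eBetween (n : ℕ) (E : Finset (Finset (Fin n))) (T U : Finset (Fin n)) : ℕ :=
  (E.filter (fun s => (s ∩ T).card = 1 ∧ s \ T ⊆ U)).card

/-- `(ε,p)`-pseudorandomness of an `r`-uniform hypergraph on `Fin n`. -/
def Pseudorandom (r n : ℕ) (ε p : ℝ) (E : Finset (Finset (Fin n))) : Prop :=
  (∀ T U : Finset (Fin n), Disjoint T U → U.card ≤ T.card →
    (eBetween n E T U : ℝ) ≤
      (1 + ε) * p * T.card * (U.card.choose (r - 1)) +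
        T.card * (Real.log n) ^ ((1 : ℝ) + ε)) ∧
  (∀ T U : Finset (Fin n), Disjoint T U →
    ε * U.card ≤ (T.card : ℝ) → T.card ≤ U.card → (U.card : ℝ) ≤ n / 2 →
    (13 * (Nat.factorial (r - 1)) * Real.log n / (ε ^ 3 * p)) ^
        ((1 : ℝ) / (r - 1)) ≤ (U.card : ℝ) →
    (eBetween n E T U : ℝ) ≤ (1 + ε) * p * T.card * (U.card.choose (r - 1)))

/-- `degIn n E x U` is the number of hyperedges of `E` containing `x` and
otherwise contained in `U`. -/
def degIn (n : ℕ) (E : Finset (Finset (Fin n))) (x : Fin n) (U : Finset (Fin n)) : ℕ :=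
  (E.filter (fun s => x ∈ s ∧ s \ {x} ⊆ U)).card

/- ## Auxiliary lemmas -/

section Aux

open Filter Topology Real

lemma descF_mul_pow_le (j : ℕ) {k m : ℕ} (h : k ≤ m) :
    k.descFactorial j * m ^ j ≤ k ^ j * m.descFactorial j := by
  induction j with
  | zero => simp
  | succ j ih =>
    rw [Nat.descFactorial_succ, Nat.descFactorial_succ, pow_succ, pow_succ]
    have key : m * (k - j) ≤ k * (m - j) := by
      rcases le_or_gt k j with hkj | hkj
      · simp [Nat.sub_eq_zero_of_le hkj]
      · have h1 : k * j ≤ m * j := Nat.mul_le_mul_right _ h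
        have h2 : j ≤ k := hkj.le
        have h3 : j ≤ m := h2.trans h
        zify [h2, h3]
        nlinarith
    calc (k - j) * k.descFactorial j * (m ^ j * m)
        = (m * (k - j)) * (k.descFactorial j * m ^ j) := by ring
      _ ≤ (k * (m - j)) * (k ^ j * m.descFactorial j) :=
          Nat.mul_le_mul key ih
      _ = k ^ j * k * ((m - j) * m.descFactorial j) := by ring

lemma choose_mul_pow_le (j : ℕ) {k m : ℕ} (h : k ≤ m) :
    k.choose j * m ^ j ≤ k ^ j * m.choose j := by
  have h1 := descF_mul_pow_le j h
  rw [Nat.descFactorial_eq_factorial_mul_choose, Nat.descFactorial_eq_factorial_mul_choose] at h1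
  have h2 : j.factorial * (k.choose j * m ^ j) ≤ j.factorial * (k ^ j * m.choose j) := by
    calc j.factorial * (k.choose j * m ^ j) = j.factorial * k.choose j * m ^ j := by ring
      _ ≤ k ^ j * (j.factorial * m.choose j) := h1
      _ = j.factorial * (k ^ j * m.choose j) := by ring
  exact Nat.le_of_mul_le_mul_left h2 (Nat.factorial_pos j)

lemma half_ratio_ev (r : ℕ) (γ ε : ℝ) (hr : 3 ≤ r) (hγ0 : 0 < γ) (hε0 : 0 < ε)
    (hε1 : ε ≤ 2 ^ (r - 3) * γ) :
    ∃ M₁ : ℕ, ∀ m : ℕ, M₁ ≤ m →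
      (1 + ε) * (((m : ℝ) + 1) / (2 * m)) ^ (r - 1) ≤ 1 / 2 ^ (r - 1) + γ / 2 := by
  have t1 : Tendsto (fun m : ℕ => 1 / 2 + 1 / 2 * (1 / (m : ℝ))) atTop (𝓝 (1 / 2)) := by
    simpa using (tendsto_one_div_atTop_nhds_zero_nat.const_mul (1 / 2 : ℝ)).const_add (1/2 : ℝ)
  have t2 : Tendsto (fun m : ℕ => (1 + ε) * (1 / 2 + 1 / 2 * (1 / (m : ℝ))) ^ (r - 1)) atTop
      (𝓝 ((1 + ε) * (1 / 2) ^ (r - 1))) := (t1.pow (r - 1)).const_mul _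
  have eeq : (fun m : ℕ => (1 + ε) * (1 / 2 + 1 / 2 * (1 / (m : ℝ))) ^ (r - 1)) =ᶠ[atTop]
      (fun m : ℕ => (1 + ε) * (((m : ℝ) + 1) / (2 * m)) ^ (r - 1)) := by
    filter_upwards [eventually_ge_atTop 1] with m hm
    have hm0 : (m : ℝ) ≠ 0 := by positivity
    have : ((m : ℝ) + 1) / (2 * m) = 1 / 2 + 1 / 2 * (1 / m) := by field_simp
    rw [this]
  have hvu : (1 + ε) * (1 / 2 : ℝ) ^ (r - 1) < 1 / 2 ^ (r - 1) + γ / 2 := by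
    have h2 : (2 : ℝ) ^ (r - 1) = 4 * 2 ^ (r - 3) := by
      rw [show r - 1 = (r - 3) + 2 by omega, pow_add]; ring
    have hP : (0 : ℝ) < 2 ^ (r - 1) := by positivity
    have hp3 : (0 : ℝ) < 2 ^ (r - 3) := by positivity
    rw [div_pow, one_pow, mul_one_div, div_lt_iff₀ hP, add_mul,
      one_div_mul_cancel hP.ne']
    nlinarith [mul_pos hp3 hγ0]
  have := (t2.congr' eeq).eventually_lt_const hvu
  obtain ⟨M₁, hM₁⟩ := eventually_atTop.mp this
  exact ⟨M₁, fun m hm => (hM₁ m hm).le⟩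

lemma n_conds (c ε Kγ M : ℝ) (hεc : 1 + ε < c) :
    ∃ n₀ : ℕ, ∀ n : ℕ, n₀ ≤ n → 3 ≤ n ∧ M ≤ (n : ℝ) / (Real.log n) ^ c ∧
      Kγ < (Real.log n) ^ (c - 1 - ε) ∧ 1 < Real.log n := by
  have h1 : ∀ᶠ x : ℝ in atTop, M ≤ x / (Real.log x) ^ c := by
    have hlo := (isLittleO_log_rpow_rpow_atTop c (by norm_num : (0:ℝ) < 1/2)).def one_pos
    filter_upwards [hlo, eventually_ge_atTop (max 1 (M ^ 2)),
      tendsto_log_atTop.eventually_ge_atTop 1] with x hx hx1 hlog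
    have hx0 : (0:ℝ) < x := lt_of_lt_of_le one_pos (le_trans (le_max_left _ _) hx1)
    have hlogc : (0:ℝ) < (Real.log x) ^ c := rpow_pos_of_pos (by linarith) c
    have hxr : ‖x ^ (1/2 : ℝ)‖ = x ^ (1/2 : ℝ) := by
      rw [Real.norm_eq_abs, abs_of_nonneg (rpow_nonneg hx0.le _)]
    have hlogn : ‖(Real.log x) ^ c‖ = (Real.log x) ^ c := by
      rw [Real.norm_eq_abs, abs_of_nonneg hlogc.le]
    rw [hxr, hlogn, one_mul] at hx
    have hhalf : M ≤ x ^ (1/2 : ℝ) := by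
      rcases le_or_gt M 0 with hM | hM
      · exact hM.trans (rpow_nonneg hx0.le _)
      · have h2 : M ^ 2 ≤ x := le_trans (le_max_right _ _) hx1
        have h3 := Real.rpow_le_rpow (by positivity) h2 (by norm_num : (0:ℝ) ≤ 1/2)
        rw [← Real.rpow_natCast M 2, ← Real.rpow_mul hM.le] at h3
        rw [show ((2:ℕ):ℝ) * (1/2) = 1 by norm_num, Real.rpow_one] at h3
        exact h3
    calc M ≤ x ^ (1/2:ℝ) := hhalf
      _ = x / x ^ (1/2:ℝ) := by
          rw [eq_div_iff (by positivity), ← Real.rpow_add hx0]; norm_num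
      _ ≤ x / (Real.log x) ^ c := by
          exact div_le_div_of_nonneg_left hx0.le hlogc hx
  have h2 : ∀ᶠ x : ℝ in atTop, Kγ < (Real.log x) ^ (c - 1 - ε) := by
    have : Tendsto (fun x : ℝ => (Real.log x) ^ (c - 1 - ε)) atTop atTop :=
      (tendsto_rpow_atTop (by linarith)).comp tendsto_log_atTop
    exact this.eventually_gt_atTop Kγ
  have h3 : ∀ᶠ x : ℝ in atTop, 1 < Real.log x := tendsto_log_atTop.eventually_gt_atTop 1
  have hnat : ∀ᶠ n : ℕ in atTop, M ≤ (n:ℝ) / (Real.log n) ^ c ∧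
      Kγ < (Real.log n) ^ (c - 1 - ε) ∧ 1 < Real.log n :=
    tendsto_natCast_atTop_atTop.eventually ((h1.and (h2.and h3)))
  obtain ⟨n₀, hn₀⟩ := eventually_atTop.mp (hnat.and (eventually_ge_atTop 3))
  exact ⟨n₀, fun n hn => ⟨(hn₀ n hn).2, (hn₀ n hn).1.1, (hn₀ n hn).1.2.1, (hn₀ n hn).1.2.2⟩⟩

lemma key2_bound (r n m : ℕ) (c ε γ p : ℝ) (hr : 3 ≤ r) (hγ0 : 0 < γ)
    (hL : 1 < Real.log n) (hm2r : 2 * r ≤ m)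
    (hm : (n : ℝ) / (Real.log n) ^ c ≤ m)
    (hp : (Real.log n) ^ (c * r) / (n : ℝ) ^ (r - 1) ≤ p)
    (hA3 : 2 * (2 ^ (r - 1) * ((r - 1).factorial : ℝ)) / γ < (Real.log n) ^ (c - 1 - ε)) :
    (Real.log n) ^ ((1 : ℝ) + ε) < γ / 2 * p * (m.choose (r - 1) : ℝ) := by
  set L := Real.log n with hLdef
  have hL0 : (0 : ℝ) < L := by linarith
  have hn1 : (1 : ℝ) < (n : ℝ) := by
    by_contra h
    push_neg at h
    have : L ≤ 0 := Real.log_nonpos (by positivity) h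
    linarith
  have hn0 : (0 : ℝ) < (n : ℝ) := by linarith
  set K : ℝ := 2 ^ (r - 1) * ((r - 1).factorial : ℝ) with hKdef
  have hK0 : (0 : ℝ) < K := by positivity
  set A := L ^ c with hAdef
  have hA0 : (0 : ℝ) < A := rpow_pos_of_pos hL0 c
  set q : ℕ := m + 1 - (r - 1) with hqdef
  have hq1 : 1 ≤ q := by omega
  have hq0 : (0 : ℝ) < (q : ℝ) := by exact_mod_cast hq1
  have hmq : (m : ℝ) ≤ 2 * q := by
    have : m ≤ 2 * q := by omega
    exact_mod_cast this
  have hnAq : (n : ℝ) ≤ 2 * A * q := by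
    have h1 : (n : ℝ) ≤ (m : ℝ) * A := by
      rw [div_le_iff₀ (by positivity)] at hm
      exact hm
    calc (n : ℝ) ≤ (m : ℝ) * A := h1
      _ ≤ (2 * q) * A := mul_le_mul_of_nonneg_right hmq hA0.le
      _ = 2 * A * q := by ring
  have hCq : ((q : ℝ)) ^ (r - 1) / ((r - 1).factorial : ℝ) ≤ (m.choose (r - 1) : ℝ) := by
    have h1 : q ^ (r - 1) ≤ m.descFactorial (r - 1) := Nat.pow_sub_le_descFactorial m (r - 1)
    rw [Nat.descFactorial_eq_factorial_mul_choose] at h1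
    have h2 : ((q : ℝ)) ^ (r - 1) ≤ ((r - 1).factorial : ℝ) * (m.choose (r - 1) : ℝ) := by
      exact_mod_cast h1
    rw [div_le_iff₀ (by positivity)]
    linarith
  have hLcr : L ^ (c * (r : ℝ)) = A ^ r := by
    rw [Real.rpow_mul hL0.le, Real.rpow_natCast]
  have hr1 : r - 1 + 1 = r := by omega
  have hstep : A / K ≤ (A ^ r / (2 * A * q) ^ (r - 1)) *
      ((q : ℝ) ^ (r - 1) / ((r - 1).factorial : ℝ)) := by
    have heq : (A ^ r / (2 * A * q) ^ (r - 1)) *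
        ((q : ℝ) ^ (r - 1) / ((r - 1).factorial : ℝ)) = A / K := by
      rw [hKdef, mul_pow, mul_pow]
      rw [← hr1, pow_succ]
      simp only [Nat.add_sub_cancel]
      field_simp
    rw [heq]
  have hpC : A / K ≤ p * (m.choose (r - 1) : ℝ) := by
    have h1 : A ^ r / (2 * A * q) ^ (r - 1) ≤ A ^ r / (n : ℝ) ^ (r - 1) :=
      div_le_div_of_nonneg_left (by positivity) (by positivity)
        (pow_le_pow_left₀ hn0.le hnAq _)
    have h2 : A ^ r / (n : ℝ) ^ (r - 1) ≤ p := by rw [← hLcr]; exact hp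
    calc A / K ≤ (A ^ r / (2 * A * q) ^ (r - 1)) *
          ((q : ℝ) ^ (r - 1) / ((r - 1).factorial : ℝ)) := hstep
      _ ≤ p * (m.choose (r - 1) : ℝ) := by
          apply mul_le_mul (h1.trans h2) hCq (by positivity)
          exact (lt_of_lt_of_le (by positivity) h2).le
  have hAsplit : A = L ^ ((1 : ℝ) + ε) * L ^ (c - 1 - ε) := by
    rw [hAdef, ← Real.rpow_add hL0]
    congr 1
    ring
  have h1 : 1 < γ / (2 * K) * L ^ (c - 1 - ε) := by
    rw [div_mul_eq_mul_div, lt_div_iff₀ (by positivity), one_mul]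
    rw [div_lt_iff₀ hγ0] at hA3
    linarith [hA3]
  have hLp0 : (0 : ℝ) < L ^ ((1 : ℝ) + ε) := rpow_pos_of_pos hL0 _
  calc L ^ ((1 : ℝ) + ε) = L ^ ((1 : ℝ) + ε) * 1 := by ring
    _ < L ^ ((1 : ℝ) + ε) * (γ / (2 * K) * L ^ (c - 1 - ε)) :=
        mul_lt_mul_of_pos_left h1 hLp0
    _ = γ / 2 * (A / K) := by rw [hAsplit]; field_simp
    _ ≤ γ / 2 * (p * (m.choose (r - 1) : ℝ)) :=
        mul_le_mul_of_nonneg_left hpC (by positivity)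
    _ = γ / 2 * p * (m.choose (r - 1) : ℝ) := by ring

lemma key_bound (r m : ℕ) (ε γ : ℝ) (hε0 : 0 < ε) (hm1 : 1 ≤ m)
    (hratio : (1 + ε) * (((m : ℝ) + 1) / (2 * m)) ^ (r - 1) ≤ 1 / 2 ^ (r - 1) + γ / 2) :
    (1 + ε) * ((((m + 1) / 2).choose (r - 1) : ℕ) : ℝ)
      ≤ (1 / 2 ^ (r - 1) + γ / 2) * (m.choose (r - 1) : ℝ) := by
  set h := (m + 1) / 2 with hdef
  have hhm : h ≤ m := by omega
  have hm0 : (0 : ℝ) < (m : ℝ) := by exact_mod_cast hm1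
  have hnat := choose_mul_pow_le (r - 1) hhm
  have hcast : ((h.choose (r - 1) : ℕ) : ℝ) * (m : ℝ) ^ (r - 1)
      ≤ ((h : ℕ) : ℝ) ^ (r - 1) * (m.choose (r - 1) : ℝ) := by exact_mod_cast hnat
  have hhalf : ((h : ℕ) : ℝ) ≤ ((m : ℝ) + 1) / 2 := by
    have := Nat.cast_div_le (m := m + 1) (n := 2) (α := ℝ)
    push_cast at this ⊢
    linarith
  have hhp : ((h : ℕ) : ℝ) ^ (r - 1) ≤ (((m : ℝ) + 1) / 2) ^ (r - 1) :=
    pow_le_pow_left₀ (by positivity) hhalf _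
  have hc1 : ((h.choose (r - 1) : ℕ) : ℝ)
      ≤ (((m : ℝ) + 1) / (2 * m)) ^ (r - 1) * (m.choose (r - 1) : ℝ) := by
    have hmp : (0 : ℝ) < (m : ℝ) ^ (r - 1) := by positivity
    rw [← mul_le_mul_iff_of_pos_right hmp]
    calc ((h.choose (r - 1) : ℕ) : ℝ) * (m : ℝ) ^ (r - 1)
        ≤ ((h : ℕ) : ℝ) ^ (r - 1) * (m.choose (r - 1) : ℝ) := hcast
      _ ≤ (((m : ℝ) + 1) / 2) ^ (r - 1) * (m.choose (r - 1) : ℝ) :=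
          mul_le_mul_of_nonneg_right hhp (by positivity)
      _ = (((m : ℝ) + 1) / (2 * m)) ^ (r - 1) * (m.choose (r - 1) : ℝ) * (m : ℝ) ^ (r - 1) := by
          rw [div_pow, div_pow, mul_pow]
          field_simp
  calc (1 + ε) * ((h.choose (r - 1) : ℕ) : ℝ)
      ≤ (1 + ε) * ((((m : ℝ) + 1) / (2 * m)) ^ (r - 1) * (m.choose (r - 1) : ℝ)) :=
        mul_le_mul_of_nonneg_left hc1 (by linarith)
    _ = ((1 + ε) * (((m : ℝ) + 1) / (2 * m)) ^ (r - 1)) * (m.choose (r - 1) : ℝ) := by ring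
    _ ≤ (1 / 2 ^ (r - 1) + γ / 2) * (m.choose (r - 1) : ℝ) :=
        mul_le_mul_of_nonneg_right hratio (by positivity)

lemma core_count (r n m : ℕ) (γ ε p : ℝ) (EH Eh : Finset (Finset (Fin n)))
    (hsub : Eh ⊆ EH) (hp0 : 0 < p) (hε0 : 0 < ε)
    (hpr : ∀ T U : Finset (Fin n), Disjoint T U → U.card ≤ T.card →
      (eBetween n EH T U : ℝ) ≤
        (1 + ε) * p * T.card * (U.card.choose (r - 1)) +
          T.card * (Real.log n) ^ ((1 : ℝ) + ε))
    (key : (1 + ε) * ((((m + 1) / 2).choose (r - 1) : ℕ) : ℝ) ≤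
      (1 / 2 ^ (r - 1) + γ / 2) * (m.choose (r - 1) : ℝ))
    (key2 : (Real.log n) ^ ((1:ℝ) + ε) < γ / 2 * p * (m.choose (r - 1) : ℝ))
    (A B : Finset (Fin n)) (hAB : Disjoint A B)
    (hdeg : ∀ u ∈ A, (1 / 2 ^ (r - 1) + γ) * p * (m.choose (r - 1) : ℝ) ≤
      (degIn n Eh u B : ℝ))
    (T : Finset (Fin n)) (hTA : T ⊆ A) (hTne : T.Nonempty) (hThalf : T.card ≤ (m + 1) / 2) :
    T.card ≤ (T.biUnion (fun u => B.filter
      (fun v => ∃ e ∈ Eh, u ∈ e ∧ v ∈ e ∧ e \ {u} ⊆ B))).card := by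
  classical
  by_contra hcon
  push_neg at hcon
  set W := T.biUnion (fun u => B.filter
      (fun v => ∃ e ∈ Eh, u ∈ e ∧ v ∈ e ∧ e \ {u} ⊆ B)) with hWdef
  have hWB : W ⊆ B := biUnion_subset.2 fun u _ => filter_subset _ _
  have hdisjTW : Disjoint T W := hAB.mono hTA hWB
  have hsum : ∑ u ∈ T, degIn n Eh u B ≤ eBetween n Eh T W := by
    have hdisj : ∀ u₁ ∈ T, ∀ u₂ ∈ T, u₁ ≠ u₂ →
        Disjoint (Eh.filter (fun s => u₁ ∈ s ∧ s \ {u₁} ⊆ B))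
          (Eh.filter (fun s => u₂ ∈ s ∧ s \ {u₂} ⊆ B)) := by
      intro u₁ h₁ u₂ h₂ hne
      rw [disjoint_left]
      intro e he1 he2
      simp only [mem_filter] at he1 he2
      have : u₂ ∈ e \ {u₁} := by
        simp only [Finset.mem_sdiff, mem_singleton]
        exact ⟨he2.2.1, Ne.symm hne⟩
      have hB : u₂ ∈ B := he1.2.2 this
      exact (disjoint_left.mp hAB (hTA h₂)) hB
    have hbu : (T.biUnion (fun u => Eh.filter (fun s => u ∈ s ∧ s \ {u} ⊆ B))).card
        = ∑ u ∈ T, degIn n Eh u B := card_biUnion hdisj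
    rw [← hbu]
    unfold eBetween
    apply card_le_card
    intro e he
    rw [mem_biUnion] at he
    obtain ⟨u, huT, he⟩ := he
    simp only [mem_filter] at he
    obtain ⟨heEh, hue, heB⟩ := he
    have heT : e ∩ T = {u} := by
      apply Subset.antisymm
      · intro x hx
        rw [mem_inter] at hx
        rw [mem_singleton]
        by_contra hxu
        have : x ∈ e \ {u} := by
          simp only [Finset.mem_sdiff, mem_singleton]; exact ⟨hx.1, hxu⟩
        exact (disjoint_left.mp hAB (hTA hx.2)) (heB this)
      · intro x hx
        rw [mem_singleton] at hx
        subst hx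
        exact mem_inter.mpr ⟨hue, huT⟩
    rw [mem_filter]
    refine ⟨heEh, by rw [heT, card_singleton], ?_⟩
    intro x hx
    rw [Finset.mem_sdiff] at hx
    have hxu : x ≠ u := fun h => hx.2 (h ▸ huT)
    have hxB : x ∈ B := heB (by simp only [Finset.mem_sdiff, mem_singleton]; exact ⟨hx.1, hxu⟩)
    rw [hWdef, mem_biUnion]
    exact ⟨u, huT, mem_filter.mpr ⟨hxB, e, heEh, hue, hx.1, heB⟩⟩
  have hmono : eBetween n Eh T W ≤ eBetween n EH T W :=
    card_le_card (filter_subset_filter _ hsub)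
  have hub := hpr T W hdisjTW hcon.le
  have hlow : (T.card : ℝ) * ((1 / 2 ^ (r - 1) + γ) * p * (m.choose (r - 1) : ℝ))
      ≤ (eBetween n EH T W : ℝ) := by
    have h1 : (T.card : ℝ) * ((1 / 2 ^ (r - 1) + γ) * p * (m.choose (r - 1) : ℝ))
        ≤ ∑ u ∈ T, (degIn n Eh u B : ℝ) := by
      have := Finset.sum_le_sum (fun u hu => hdeg u (hTA hu))
      rw [Finset.sum_const] at this
      rwa [nsmul_eq_mul] at this
    have h2 : (∑ u ∈ T, (degIn n Eh u B : ℝ)) ≤ (eBetween n EH T W : ℝ) := by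
      rw [← Nat.cast_sum]
      exact_mod_cast hsum.trans hmono
    linarith
  have hWhalf : W.card ≤ (m + 1) / 2 := le_trans (Nat.le_of_lt hcon) hThalf
  have hCle : ((W.card.choose (r - 1) : ℕ) : ℝ) ≤ ((((m+1)/2).choose (r - 1) : ℕ) : ℝ) :=
    Nat.cast_le.mpr (Nat.choose_le_choose _ hWhalf)
  have ht0 : (0 : ℝ) < T.card := by exact_mod_cast hTne.card_pos
  set t := (T.card : ℝ)
  set Cw := ((W.card.choose (r - 1) : ℕ) : ℝ)
  set Ch := ((((m+1)/2).choose (r - 1) : ℕ) : ℝ)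
  set Cm := ((m.choose (r - 1) : ℕ) : ℝ)
  set Lp := (Real.log n) ^ ((1:ℝ) + ε)
  have e2 : (1 + ε) * p * t * Cw ≤ (1 + ε) * p * t * Ch := by
    exact mul_le_mul_of_nonneg_left hCle
      (mul_nonneg (mul_nonneg (by linarith) hp0.le) ht0.le)
  have e4 : (1 + ε) * p * t * Ch ≤ t * ((1 / 2 ^ (r - 1) + γ / 2) * p * Cm) := by
    calc (1 + ε) * p * t * Ch = (t * p) * ((1 + ε) * Ch) := by ring
      _ ≤ (t * p) * ((1 / 2 ^ (r - 1) + γ / 2) * Cm) := by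
          exact mul_le_mul_of_nonneg_left key (mul_nonneg ht0.le hp0.le)
      _ = t * ((1 / 2 ^ (r - 1) + γ / 2) * p * Cm) := by ring
  have e5 : t * Lp < t * (γ / 2 * p * Cm) := by
    exact mul_lt_mul_of_pos_left key2 ht0
  have := hlow.trans hub
  nlinarith

lemma inter_eq_of_sdiff_subset {n : ℕ} {U₁ U₂ e : Finset (Fin n)} (hd : Disjoint U₁ U₂)
    {x : Fin n} (hx : x ∈ e) (hxU : x ∈ U₁) (h : e \ {x} ⊆ U₂) :
    e ∩ U₁ = {x} ∧ e ∩ U₂ = e \ {x} := by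
  constructor
  · apply Subset.antisymm
    · intro y hy
      rw [mem_inter] at hy
      rw [mem_singleton]
      by_contra hyx
      exact (disjoint_left.mp hd hy.2)
        (h (mem_sdiff.mpr ⟨hy.1, by simpa using hyx⟩))
    · intro y hy
      rw [mem_singleton] at hy
      subst hy
      exact mem_inter.mpr ⟨hx, hxU⟩
  · apply Subset.antisymm
    · intro y hy
      rw [mem_inter] at hy
      rw [Finset.mem_sdiff, mem_singleton]
      exact ⟨hy.1, fun hyx => (disjoint_left.mp hd (hyx ▸ hxU)) hy.2⟩
    · intro y hy
      exact mem_inter.mpr ⟨(Finset.mem_sdiff.mp hy).1, h hy⟩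

end Aux

/-- The matching lemma: in a subgraph `H` of an `(ε,p)`-pseudorandom
`r`-uniform hypergraph, two disjoint `m`-sets `U₁, U₂` with mutual minimum
degree at least `(2^(1-r) + γ) p C(m, r-1)` admit a `(U₁,U₂)`-matching. -/
theorem stmt14 (r : ℕ) (γ c ε : ℝ) (hr : 3 ≤ r) (hγ0 : 0 < γ) (hγ1 : γ < 1)
    (hc : 1 < c) (hε0 : 0 < ε) (hε1 : ε ≤ 2 ^ (r - 3) * γ) (hε2 : 1 + ε < c) :
    ∃ n₀ : ℕ, ∀ n ≥ n₀, ∀ (p : ℝ) (EH Eh : Finset (Finset (Fin n)))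
      (U₁ U₂ : Finset (Fin n)) (m : ℕ),
      (∀ s ∈ EH, s.card = r) → Pseudorandom r n ε p EH → Eh ⊆ EH →
      Disjoint U₁ U₂ → U₁.card = m → U₂.card = m →
      (n : ℝ) / (Real.log n) ^ c ≤ (m : ℝ) →
      (Real.log n) ^ (c * r) / (n : ℝ) ^ (r - 1) ≤ p →
      (∀ u ∈ U₁, (1 / 2 ^ (r - 1) + γ) * p * (m.choose (r - 1)) ≤
        (degIn n Eh u U₂ : ℝ)) →
      (∀ u ∈ U₂, (1 / 2 ^ (r - 1) + γ) * p * (m.choose (r - 1)) ≤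
        (degIn n Eh u U₁ : ℝ)) →
      ∃ (a b : Fin m → Fin n) (e : Fin m → Finset (Fin n)),
        Function.Injective a ∧ Function.Injective b ∧ Function.Injective e ∧
        ∀ i, a i ∈ U₁ ∧ b i ∈ U₂ ∧ e i ∈ Eh ∧ a i ∈ e i ∧ b i ∈ e i ∧
          (((e i ∩ U₁).card = 1 ∧ (e i ∩ U₂).card = r - 1) ∨
           ((e i ∩ U₁).card = r - 1 ∧ (e i ∩ U₂).card = 1)) := by
  classical
  obtain ⟨M₁, hM₁⟩ := half_ratio_ev r γ ε hr hγ0 hε0 hε1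
  obtain ⟨n₀, hn₀⟩ := n_conds c ε (2 * (2 ^ (r - 1) * ((r - 1).factorial : ℝ)) / γ)
    ((max (2 * r) (max M₁ 1) : ℕ) : ℝ) hε2
  refine ⟨n₀, ?_⟩
  intro n hn p EH Eh U₁ U₂ m hcard hPR hsub hdisj hU₁ hU₂ hm hp hdeg₁ hdeg₂
  obtain ⟨hn3, hMle, hA3, hL⟩ := hn₀ n hn
  have hL0 : (0 : ℝ) < Real.log n := by linarith
  have hn0 : 0 < n := by omega
  -- m is large
  have hmM : ((max (2 * r) (max M₁ 1) : ℕ) : ℝ) ≤ (m : ℝ) := le_trans hMle hm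
  have hmM' : max (2 * r) (max M₁ 1) ≤ m := by exact_mod_cast hmM
  have hm2r : 2 * r ≤ m := le_trans (le_max_left _ _) hmM'
  have hmM₁ : M₁ ≤ m := le_trans (le_trans (le_max_left _ _) (le_max_right _ _)) hmM'
  have hm1 : 1 ≤ m := le_trans (le_trans (le_max_right _ _) (le_max_right _ _)) hmM'
  -- p positive
  have hp0 : (0 : ℝ) < p := by
    refine lt_of_lt_of_le ?_ hp
    have h1 : (0:ℝ) < (Real.log n) ^ (c * (r:ℝ)) := Real.rpow_pos_of_pos hL0 _
    have h2 : (0:ℝ) < ((n:ℝ)) ^ (r - 1) := by positivity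
    positivity
  -- the two key analytic inequalities
  have key : (1 + ε) * ((((m + 1) / 2).choose (r - 1) : ℕ) : ℝ) ≤
      (1 / 2 ^ (r - 1) + γ / 2) * (m.choose (r - 1) : ℝ) :=
    key_bound r m ε γ hε0 hm1 (hM₁ m hmM₁)
  have key2 : (Real.log n) ^ ((1:ℝ) + ε) < γ / 2 * p * (m.choose (r - 1) : ℝ) :=
    key2_bound r n m c ε γ p hr hγ0 hL hm2r hm hp hA3
  -- the core counting consequence
  have core : ∀ (A B : Finset (Fin n)), Disjoint A B →
      (∀ u ∈ A, (1 / 2 ^ (r - 1) + γ) * p * (m.choose (r - 1) : ℝ) ≤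
        (degIn n Eh u B : ℝ)) →
      ∀ T : Finset (Fin n), T ⊆ A → T.Nonempty → T.card ≤ (m + 1) / 2 →
      T.card ≤ (T.biUnion (fun u => B.filter
        (fun v => ∃ e ∈ Eh, u ∈ e ∧ v ∈ e ∧ e \ {u} ⊆ B))).card :=
    fun A B hAB hdeg T hTA hTne hThalf =>
      core_count r n m γ ε p EH Eh hsub hp0 hε0 hPR.1 key key2 A B hAB hdeg T hTA hTne hThalf
  -- Hall's condition
  set Nbr : Fin n → Finset (Fin n) := fun u => U₂.filter
    (fun v => ∃ e ∈ Eh, u ∈ e ∧ v ∈ e ∧ (e \ {u} ⊆ U₂ ∨ e \ {v} ⊆ U₁)) with hNbr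
  have hall : ∀ S : Finset {x // x ∈ U₁}, S.card ≤ (S.biUnion (fun u => Nbr u)).card := by
    intro S
    rcases S.eq_empty_or_nonempty with hS | hSne
    · simp [hS]
    by_contra hlt
    push_neg at hlt
    set T := S.image Subtype.val with hTdef
    have hTcard : T.card = S.card := card_image_of_injective _ Subtype.val_injective
    have hTU₁ : T ⊆ U₁ := by
      intro x hx
      rw [hTdef, mem_image] at hx
      obtain ⟨y, _, rfl⟩ := hx
      exact y.2
    have hTne : T.Nonempty := hSne.image _
    set N := S.biUnion (fun u => Nbr u) with hNdef
    have hNU₂ : N ⊆ U₂ := biUnion_subset.2 fun u _ => filter_subset _ _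
    have hNbrN : ∀ x ∈ T, Nbr x ⊆ N := by
      intro x hx
      rw [hTdef, mem_image] at hx
      obtain ⟨y, hy, rfl⟩ := hx
      intro v hv
      rw [hNdef, mem_biUnion]
      exact ⟨y, hy, hv⟩
    have hNc : N.card < T.card := by rw [hTcard]; exact hlt
    have hTm : T.card ≤ m := hU₁ ▸ card_le_card hTU₁
    rcases le_or_gt T.card ((m + 1) / 2) with hTc | hTc
    · -- small side : use U₁ → U₂ counting
      have h1 := core U₁ U₂ hdisj hdeg₁ T hTU₁ hTne hTc
      have h2 : T.biUnion (fun u => U₂.filter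
          (fun v => ∃ e ∈ Eh, u ∈ e ∧ v ∈ e ∧ e \ {u} ⊆ U₂)) ⊆ N := by
        intro v hv
        rw [mem_biUnion] at hv
        obtain ⟨u, huT, hv⟩ := hv
        rw [mem_filter] at hv
        obtain ⟨hvU₂, e, he, hue, hve, heU₂⟩ := hv
        exact hNbrN u huT (mem_filter.mpr ⟨hvU₂, e, he, hue, hve, Or.inl heU₂⟩)
      have := h1.trans (card_le_card h2)
      omega
    · -- large side : use U₂ → U₁ counting
      set k := m - T.card + 1 with hk
      have hsd : (U₂ \ N).card = m - N.card := by
        rw [card_sdiff_of_subset hNU₂, hU₂]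
      obtain ⟨T'', hT''sub, hT''card⟩ := Finset.exists_subset_card_eq (show k ≤ (U₂ \ N).card by omega)
      have hT''U₂ : T'' ⊆ U₂ := hT''sub.trans (sdiff_subset)
      have hT''ne : T''.Nonempty := by
        rw [← card_pos, hT''card]; omega
      have hT''half : T''.card ≤ (m + 1) / 2 := by
        rw [hT''card]; omega
      have h1 := core U₂ U₁ hdisj.symm hdeg₂ T'' hT''U₂ hT''ne hT''half
      have h2 : T''.biUnion (fun v => U₁.filter
          (fun u => ∃ e ∈ Eh, v ∈ e ∧ u ∈ e ∧ e \ {v} ⊆ U₁)) ⊆ U₁ \ T := by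
        intro u hu
        rw [mem_biUnion] at hu
        obtain ⟨v, hvT'', hu⟩ := hu
        rw [mem_filter] at hu
        obtain ⟨huU₁, e, he, hve, hue, heU₁⟩ := hu
        rw [mem_sdiff]
        refine ⟨huU₁, fun huT => ?_⟩
        have hvN : v ∈ N := hNbrN u huT
          (mem_filter.mpr ⟨hT''U₂ hvT'', e, he, hue, hve, Or.inr heU₁⟩)
        have := hT''sub hvT''
        rw [mem_sdiff] at this
        exact this.2 hvN
      have h3 : (U₁ \ T).card = m - T.card := by
        rw [card_sdiff_of_subset hTU₁, hU₁]
      have := h1.trans (card_le_card h2)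
      omega
  -- apply Hall's theorem
  obtain ⟨f, hfinj, hf⟩ :=
    (Finset.all_card_le_biUnion_card_iff_exists_injective (fun u : {x // x ∈ U₁} => Nbr u)).mp hall
  set g : Fin m ≃ {x // x ∈ U₁} := (Finset.equivFinOfCardEq hU₁).symm with hg
  set a : Fin m → Fin n := fun i => (g i : Fin n) with ha
  set b : Fin m → Fin n := fun i => f (g i) with hb
  have hainj : Function.Injective a := fun i j hij => g.injective (Subtype.ext hij)
  have hbinj : Function.Injective b := fun i j hij => g.injective (hfinj hij)
  have hmem : ∀ i, b i ∈ U₂ ∧ ∃ e ∈ Eh, a i ∈ e ∧ b i ∈ e ∧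
      (e \ {a i} ⊆ U₂ ∨ e \ {b i} ⊆ U₁) := by
    intro i
    have := hf (g i)
    rw [hNbr, mem_filter] at this
    exact this
  have hex : ∀ i, ∃ e, e ∈ Eh ∧ a i ∈ e ∧ b i ∈ e ∧
      (e \ {a i} ⊆ U₂ ∨ e \ {b i} ⊆ U₁) := by
    intro i
    obtain ⟨_, e, he, h1, h2, h3⟩ := hmem i
    exact ⟨e, he, h1, h2, h3⟩
  choose e he1 he2 he3 he4 using hex
  have haU : ∀ i, a i ∈ U₁ := fun i => (g i).2
  have hbU : ∀ i, b i ∈ U₂ := fun i => (hmem i).1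
  have hecard : ∀ i, (e i).card = r := fun i => hcard _ (hsub (he1 i))
  -- structure of each edge
  have htype : ∀ i, (e i ∩ U₁ = {a i} ∧ e i ∩ U₂ = e i \ {a i}) ∨
      (e i ∩ U₂ = {b i} ∧ e i ∩ U₁ = e i \ {b i}) := by
    intro i
    rcases he4 i with h | h
    · exact Or.inl (inter_eq_of_sdiff_subset hdisj (he2 i) (haU i) h)
    · exact Or.inr (inter_eq_of_sdiff_subset hdisj.symm (he3 i) (hbU i) h)
  have heinj : Function.Injective e := by
    intro i j hij
    rcases htype i with ⟨h1, _⟩ | ⟨h1, _⟩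
    · have : a j ∈ e i ∩ U₁ := mem_inter.mpr ⟨hij ▸ he2 j, haU j⟩
      rw [h1, mem_singleton] at this
      exact hainj this.symm
    · have : b j ∈ e i ∩ U₂ := mem_inter.mpr ⟨hij ▸ he3 j, hbU j⟩
      rw [h1, mem_singleton] at this
      exact hbinj this.symm
  refine ⟨a, b, e, hainj, hbinj, heinj, fun i => ⟨haU i, hbU i, he1 i, he2 i, he3 i, ?_⟩⟩
  rcases htype i with ⟨h1, h2⟩ | ⟨h1, h2⟩
  · left
    constructor
    · rw [h1, card_singleton]
    · rw [h2, card_sdiff_of_subset (singleton_subset_iff.mpr (he2 i)), card_singleton, hecard i]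
  · right
    constructor
    · rw [h2, card_sdiff_of_subset (singleton_subset_iff.mpr (he3 i)), card_singleton, hecard i]
    · rw [h1, card_singleton]
end

section
/- Let Γ be a finite set, each element i included in a random subset independently with probability pᵢ, let 𝒮 ⊆ 2^Γ, and X = Σ_{A ∈ 𝒮} 1[A ⊆ random subset]. Then for 0 ≤ t ≤ E[X], P[X ≤ E[X] − t] ≤ exp(−t² / (2·Δ̄)), where Δ̄ = E[X] + Σ_{A ∈ 𝒮} Σ_{B ∈ 𝒮, B ≠ A, A ∩ B ≠ ∅} E[X_A X_B]. -/
open Finset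
open scoped Classical

namespace Janson

set_option linter.unusedSectionVars false

variable {Γ : Type*} [Fintype Γ] [DecidableEq Γ]

noncomputable def w (p : Γ → ℝ) (σ : Finset Γ) : ℝ :=
  (∏ i ∈ σ, p i) * ∏ i ∈ σᶜ, (1 - p i)

noncomputable def ind (A σ : Finset Γ) : ℝ := if A ⊆ σ then 1 else 0

lemma ind_nonneg (A σ : Finset Γ) : 0 ≤ ind A σ := by
  unfold ind; split <;> norm_num

lemma ind_le_one (A σ : Finset Γ) : ind A σ ≤ 1 := by
  unfold ind; split <;> norm_num

lemma w_nonneg (p : Γ → ℝ) (hp0 : ∀ i, 0 ≤ p i) (hp1 : ∀ i, p i ≤ 1) (σ : Finset Γ) :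
    0 ≤ w p σ := by
  unfold w
  apply mul_nonneg
  · exact Finset.prod_nonneg fun i _ => hp0 i
  · exact Finset.prod_nonneg fun i _ => by linarith [hp1 i]

lemma total (p : Γ → ℝ) : ∑ σ : Finset Γ, w p σ = 1 := by
  have h := Finset.prod_add p (fun i => 1 - p i) (univ : Finset Γ)
  simp only [add_sub_cancel, Finset.prod_const_one] at h
  rw [show (1:ℝ) = ∑ t ∈ (univ : Finset Γ).powerset, (∏ i ∈ t, p i) * ∏ i ∈ univ \ t, (1 - p i) from h]
  rw [Finset.powerset_univ]
  apply Finset.sum_congr rfl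
  intro σ _
  unfold w
  rw [Finset.compl_eq_univ_sdiff]

lemma modular (p : Γ → ℝ) (σ τ : Finset Γ) :
    w p σ * w p τ = w p (σ ∩ τ) * w p (σ ∪ τ) := by
  unfold w
  rw [show ((σ ∩ τ)ᶜ : Finset Γ) = σᶜ ∪ τᶜ by rw [Finset.compl_inter],
      show ((σ ∪ τ)ᶜ : Finset Γ) = σᶜ ∩ τᶜ by rw [Finset.compl_union]]
  have h1 := Finset.prod_union_inter (s₁ := σ) (s₂ := τ) (f := p)
  have h2 := Finset.prod_union_inter (s₁ := σᶜ) (s₂ := τᶜ) (f := fun i => 1 - p i)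
  calc ((∏ i ∈ σ, p i) * ∏ i ∈ σᶜ, (1 - p i)) * ((∏ i ∈ τ, p i) * ∏ i ∈ τᶜ, (1 - p i))
      = ((∏ i ∈ σ, p i) * ∏ i ∈ τ, p i) * ((∏ i ∈ σᶜ, (1 - p i)) * ∏ i ∈ τᶜ, (1 - p i)) := by ring
    _ = ((∏ x ∈ σ ∪ τ, p x) * ∏ x ∈ σ ∩ τ, p x) *
        ((∏ x ∈ σᶜ ∪ τᶜ, (1 - p x)) * ∏ x ∈ σᶜ ∩ τᶜ, (1 - p x)) := by rw [h1, h2]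
    _ = ((∏ i ∈ σ ∩ τ, p i) * ∏ i ∈ σᶜ ∪ τᶜ, (1 - p i)) *
        ((∏ i ∈ σ ∪ τ, p i) * ∏ i ∈ σᶜ ∩ τᶜ, (1 - p i)) := by ring

lemma ind_mul_ind (A B σ : Finset Γ) : ind A σ * ind B σ = ind (A ∪ B) σ := by
  unfold ind
  by_cases hA : A ⊆ σ <;> by_cases hB : B ⊆ σ <;>
    simp [hA, hB, Finset.union_subset_iff]

lemma ind_inf_sup (A σ τ : Finset Γ) :
    ind A σ * ind A τ = ind A (σ ∩ τ) * ind A (σ ∪ τ) := by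
  unfold ind
  by_cases hA : A ⊆ σ <;> by_cases hB : A ⊆ τ
  · simp [Finset.subset_inter hA hB, hA.trans Finset.subset_union_left, hA, hB]
  all_goals
    simp only [hA, hB, if_true, if_false, mul_zero, zero_mul, mul_one, one_mul]
  · have : ¬ A ⊆ σ ∩ τ := fun h => hB (h.trans Finset.inter_subset_right)
    simp [this]
  · have : ¬ A ⊆ σ ∩ τ := fun h => hA (h.trans Finset.inter_subset_left)
    simp [this]
  · have : ¬ A ⊆ σ ∩ τ := fun h => hA (h.trans Finset.inter_subset_left)
    simp [this]

end Janson

namespace Janson2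
open Janson

variable {Γ : Type*} [Fintype Γ] [DecidableEq Γ]

set_option linter.unusedSectionVars false

lemma sum_split (A : Finset Γ) (F : Finset Γ → ℝ) :
    ∑ σ : Finset Γ, F σ = ∑ u ∈ A.powerset, ∑ v ∈ Aᶜ.powerset, F (u ∪ v) := by
  rw [← Finset.sum_product']
  refine Finset.sum_nbij' (i := fun σ => (σ ∩ A, σ \ A)) (j := fun uv => uv.1 ∪ uv.2)
    ?_ ?_ ?_ ?_ ?_
  · intro σ _
    simp only [Finset.mem_product, Finset.mem_powerset]
    refine ⟨Finset.inter_subset_right, fun i hi => ?_⟩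
    rw [Finset.mem_compl]
    exact (Finset.mem_sdiff.1 hi).2
  · intro uv _; exact Finset.mem_univ _
  · intro σ _
    ext i
    simp only [Finset.mem_union, Finset.mem_inter, Finset.mem_sdiff]
    tauto
  · rintro ⟨u, v⟩ huv
    simp only [Finset.mem_product, Finset.mem_powerset] at huv
    obtain ⟨hu, hv⟩ := huv
    have hdv : Disjoint v A := Finset.disjoint_left.2 fun i hiv hiA =>
      (Finset.mem_compl.1 (hv hiv)) hiA
    have h1 : (u ∪ v) ∩ A = u := by
      rw [Finset.union_inter_distrib_right, Finset.inter_eq_left.2 hu,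
        Finset.disjoint_iff_inter_eq_empty.1 hdv, Finset.union_empty]
    have h2 : (u ∪ v) \ A = v := by
      rw [Finset.union_sdiff_distrib, Finset.sdiff_eq_empty_iff_subset.2 hu,
        hdv.sdiff_eq_left, Finset.empty_union]
    simp [h1, h2]
  · intro σ _
    congr 1
    ext i
    simp only [Finset.mem_union, Finset.mem_inter, Finset.mem_sdiff]
    tauto

lemma bern (A : Finset Γ) (p : Γ → ℝ) :
    ∑ u ∈ A.powerset, (∏ i ∈ u, p i) * ∏ i ∈ A \ u, (1 - p i) = 1 := by
  have h := Finset.prod_add p (fun i => 1 - p i) A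
  simp only [add_sub_cancel, Finset.prod_const_one] at h
  exact h.symm

lemma w_union_eq (p : Γ → ℝ) {A u v : Finset Γ} (hu : u ⊆ A) (hv : v ⊆ Aᶜ) :
    w p (u ∪ v) = ((∏ i ∈ u, p i) * ∏ i ∈ A \ u, (1 - p i)) *
      ((∏ i ∈ v, p i) * ∏ i ∈ Aᶜ \ v, (1 - p i)) := by
  have hduv : Disjoint u v := Finset.disjoint_left.2 fun i hiu hiv =>
    (Finset.mem_compl.1 (hv hiv)) (hu hiu)
  have hc : (u ∪ v)ᶜ = (A \ u) ∪ (Aᶜ \ v) := by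
    ext i
    simp only [Finset.mem_compl, Finset.mem_union, Finset.mem_sdiff]
    by_cases hiA : i ∈ A
    · constructor
      · rintro h; push_neg at h; exact Or.inl ⟨hiA, h.1⟩
      · rintro (⟨_, hiu⟩ | ⟨hiA', _⟩)
        · push_neg
          exact ⟨hiu, fun hiv => (Finset.mem_compl.1 (hv hiv)) hiA⟩
        · exact absurd hiA hiA'
    · constructor
      · rintro h; push_neg at h
        exact Or.inr ⟨hiA, h.2⟩
      · rintro (⟨hiA', _⟩ | ⟨_, hiv⟩)
        · exact absurd hiA' hiA
        · push_neg
          exact ⟨fun hiu => hiA (hu hiu), hiv⟩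
  have hd2 : Disjoint (A \ u) (Aᶜ \ v) :=
    (disjoint_compl_right : Disjoint A Aᶜ).mono (Finset.sdiff_subset) (Finset.sdiff_subset)
  unfold w
  rw [Finset.prod_union hduv, hc, Finset.prod_union hd2]
  ring

end Janson2

namespace Janson3
open Janson Janson2

variable {Γ : Type*} [Fintype Γ] [DecidableEq Γ]

set_option linter.unusedSectionVars false

lemma union_sdiff_eq' {A u v : Finset Γ} (hu : u ⊆ A) (hv : v ⊆ Aᶜ) :
    (u ∪ v) \ A = v := by
  have hdv : Disjoint v A := Finset.disjoint_left.2 fun i hiv hiA =>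
    (Finset.mem_compl.1 (hv hiv)) hiA
  rw [Finset.union_sdiff_distrib, Finset.sdiff_eq_empty_iff_subset.2 hu,
    hdv.sdiff_eq_left, Finset.empty_union]

lemma subset_union_iff' {A u v : Finset Γ} (hu : u ⊆ A) (hv : v ⊆ Aᶜ) :
    A ⊆ u ∪ v ↔ u = A := by
  constructor
  · intro h
    refine Finset.Subset.antisymm hu fun i hiA => ?_
    rcases Finset.mem_union.1 (h hiA) with h' | h'
    · exact h'
    · exact absurd hiA (Finset.mem_compl.1 (hv h'))
  · rintro rfl
    exact Finset.subset_union_left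

lemma indep (p : Γ → ℝ) (A : Finset Γ) (g : Finset Γ → ℝ) (hg : ∀ σ, g (σ \ A) = g σ) :
    ∑ σ : Finset Γ, w p σ * (ind A σ * g σ)
      = (∏ i ∈ A, p i) * ∑ σ : Finset Γ, w p σ * g σ := by
  rw [sum_split A (fun σ => w p σ * (ind A σ * g σ)),
      sum_split A (fun σ => w p σ * g σ)]
  have hArw : ∀ u ∈ A.powerset, ∀ v ∈ Aᶜ.powerset,
      w p (u ∪ v) * (ind A (u ∪ v) * g (u ∪ v)) =
      (if u = A then 1 else 0) *
        (((∏ i ∈ u, p i) * ∏ i ∈ A \ u, (1 - p i)) *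
          ((((∏ i ∈ v, p i) * ∏ i ∈ Aᶜ \ v, (1 - p i))) * g v)) := by
    intro u hu v hv
    rw [Finset.mem_powerset] at hu hv
    rw [w_union_eq p hu hv, ← hg (u ∪ v), union_sdiff_eq' hu hv]
    unfold ind
    by_cases h : u = A
    · rw [if_pos ((subset_union_iff' hu hv).2 h), if_pos h]; ring
    · rw [if_neg (fun hs => h ((subset_union_iff' hu hv).1 hs)), if_neg h]; ring
  have hBrw : ∀ u ∈ A.powerset, ∀ v ∈ Aᶜ.powerset,
      w p (u ∪ v) * g (u ∪ v) =
        ((∏ i ∈ u, p i) * ∏ i ∈ A \ u, (1 - p i)) *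
          ((((∏ i ∈ v, p i) * ∏ i ∈ Aᶜ \ v, (1 - p i))) * g v) := by
    intro u hu v hv
    rw [Finset.mem_powerset] at hu hv
    rw [w_union_eq p hu hv, ← hg (u ∪ v), union_sdiff_eq' hu hv]
    ring
  rw [Finset.sum_congr rfl fun u hu => Finset.sum_congr rfl fun v hv => hArw u hu v hv,
      Finset.sum_congr rfl fun u hu => Finset.sum_congr rfl fun v hv => hBrw u hu v hv]
  set C := ∑ v ∈ Aᶜ.powerset, ((∏ i ∈ v, p i) * ∏ i ∈ Aᶜ \ v, (1 - p i)) * g v with hC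
  have hL : ∀ u ∈ A.powerset,
      ∑ v ∈ Aᶜ.powerset, (if u = A then 1 else 0) *
        (((∏ i ∈ u, p i) * ∏ i ∈ A \ u, (1 - p i)) *
          ((((∏ i ∈ v, p i) * ∏ i ∈ Aᶜ \ v, (1 - p i))) * g v))
      = (if u = A then ((∏ i ∈ u, p i) * ∏ i ∈ A \ u, (1 - p i)) * C else 0) := by
    intro u hu
    by_cases h : u = A
    · simp only [if_pos h, one_mul]
      rw [hC, Finset.mul_sum]
    · simp only [if_neg h, zero_mul, Finset.sum_const_zero]
  rw [Finset.sum_congr rfl hL]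
  rw [Finset.sum_ite_eq' A.powerset A
    (fun u => ((∏ i ∈ u, p i) * ∏ i ∈ A \ u, (1 - p i)) * C)]
  rw [if_pos (Finset.mem_powerset.2 Finset.Subset.rfl)]
  have hR : ∀ u ∈ A.powerset,
      ∑ v ∈ Aᶜ.powerset, ((∏ i ∈ u, p i) * ∏ i ∈ A \ u, (1 - p i)) *
          ((((∏ i ∈ v, p i) * ∏ i ∈ Aᶜ \ v, (1 - p i))) * g v)
      = ((∏ i ∈ u, p i) * ∏ i ∈ A \ u, (1 - p i)) * C := by
    intro u hu
    rw [hC, Finset.mul_sum]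
  rw [Finset.sum_congr rfl hR, ← Finset.sum_mul, bern A p, one_mul,
    Finset.sdiff_self, Finset.prod_empty, mul_one]

lemma mass (p : Γ → ℝ) (A : Finset Γ) :
    ∑ σ : Finset Γ, w p σ * ind A σ = ∏ i ∈ A, p i := by
  have h := indep p A (fun _ => 1) (fun _ => rfl)
  simp only [mul_one] at h
  rw [h, total, mul_one]

end Janson3

namespace Janson4
open Janson Janson2 Janson3

variable {Γ : Type*} [Fintype Γ] [DecidableEq Γ]

set_option linter.unusedSectionVars false

lemma harris (p : Γ → ℝ) (hp0 : ∀ i, 0 ≤ p i) (hp1 : ∀ i, p i ≤ 1) (A : Finset Γ)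
    (f g : Finset Γ → ℝ) (hf0 : ∀ σ, 0 ≤ f σ) (hg0 : ∀ σ, 0 ≤ g σ)
    (hf : ∀ ⦃σ τ : Finset Γ⦄, σ ⊆ τ → f τ ≤ f σ)
    (hg : ∀ ⦃σ τ : Finset Γ⦄, σ ⊆ τ → g τ ≤ g σ) :
    (∑ σ : Finset Γ, (w p σ * ind A σ) * f σ) * (∑ σ : Finset Γ, (w p σ * ind A σ) * g σ)
      ≤ (∏ i ∈ A, p i) * ∑ σ : Finset Γ, (w p σ * ind A σ) * (f σ * g σ) := by
  have hconv : ∀ F : Finset Γ → ℝ,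
      ∑ σ : (Finset Γ)ᵒᵈ, F (OrderDual.ofDual σ) = ∑ σ : Finset Γ, F σ :=
    fun F => (Fintype.sum_equiv OrderDual.toDual _ _ (fun _ => rfl)).symm
  have h := fkg (α := (Finset Γ)ᵒᵈ) (β := ℝ)
    (μ := fun σ => w p (OrderDual.ofDual σ) * ind A (OrderDual.ofDual σ))
    (f := fun σ => f (OrderDual.ofDual σ)) (g := fun σ => g (OrderDual.ofDual σ))
    (fun σ => mul_nonneg (w_nonneg p hp0 hp1 _) (ind_nonneg _ _))
    (fun σ => hf0 _) (fun σ => hg0 _)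
    (fun a b hab => hf hab) (fun a b hab => hg hab)
    ?_
  · beta_reduce at h
    rw [hconv (fun σ => w p σ * ind A σ * f σ), hconv (fun σ => w p σ * ind A σ * g σ),
      hconv (fun σ => w p σ * ind A σ), hconv (fun σ => w p σ * ind A σ * (f σ * g σ))] at h
    calc (∑ σ : Finset Γ, (w p σ * ind A σ) * f σ) * (∑ σ : Finset Γ, (w p σ * ind A σ) * g σ)
        ≤ (∑ σ : Finset Γ, w p σ * ind A σ) * ∑ σ : Finset Γ, (w p σ * ind A σ) * (f σ * g σ) := h
      _ = (∏ i ∈ A, p i) * ∑ σ : Finset Γ, (w p σ * ind A σ) * (f σ * g σ) := by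
          rw [mass]
  · intro a b
    set σ := OrderDual.ofDual a
    set τ := OrderDual.ofDual b
    have h1 : OrderDual.ofDual (a ⊓ b) = σ ∪ τ := rfl
    have h2 : OrderDual.ofDual (a ⊔ b) = σ ∩ τ := rfl
    show w p σ * ind A σ * (w p τ * ind A τ) ≤
      w p (OrderDual.ofDual (a ⊓ b)) * ind A (OrderDual.ofDual (a ⊓ b)) *
        (w p (OrderDual.ofDual (a ⊔ b)) * ind A (OrderDual.ofDual (a ⊔ b)))
    rw [h1, h2]
    apply le_of_eq
    calc w p σ * ind A σ * (w p τ * ind A τ)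
        = (w p σ * w p τ) * (ind A σ * ind A τ) := by ring
      _ = (w p (σ ∩ τ) * w p (σ ∪ τ)) * (ind A (σ ∩ τ) * ind A (σ ∪ τ)) := by
          rw [modular, ind_inf_sup]
      _ = w p (σ ∪ τ) * ind A (σ ∪ τ) * (w p (σ ∩ τ) * ind A (σ ∩ τ)) := by ring

end Janson4

namespace Janson5
open Janson Janson2 Janson3 Janson4

variable {Γ : Type*} [Fintype Γ] [DecidableEq Γ]

set_option linter.unusedSectionVars false
set_option maxHeartbeats 1000000

noncomputable def XS (S : Finset (Finset Γ)) (σ : Finset Γ) : ℝ := ∑ A ∈ S, ind A σ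

noncomputable def L (p : Γ → ℝ) (S : Finset (Finset Γ)) (s : ℝ) : ℝ :=
  ∑ σ : Finset Γ, w p σ * Real.exp (-(s * XS S σ))

noncomputable def NB (S : Finset (Finset Γ)) (A : Finset Γ) : Finset (Finset Γ) :=
  S.filter (fun B => B = A ∨ (A ∩ B).Nonempty)

noncomputable def dA (p : Γ → ℝ) (S : Finset (Finset Γ)) (A : Finset Γ) : ℝ :=
  ∑ B ∈ NB S A, ∏ i ∈ A ∪ B, p i

lemma XS_nonneg (S : Finset (Finset Γ)) (σ : Finset Γ) : 0 ≤ XS S σ :=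
  Finset.sum_nonneg fun A _ => ind_nonneg A σ

lemma L_pos (p : Γ → ℝ) (hp0 : ∀ i, 0 ≤ p i) (hp1 : ∀ i, p i ≤ 1)
    (S : Finset (Finset Γ)) (s : ℝ) : 0 ≤ L p S s :=
  Finset.sum_nonneg fun σ _ => mul_nonneg (w_nonneg p hp0 hp1 σ) (Real.exp_pos _).le

lemma key (p : Γ → ℝ) (hp0 : ∀ i, 0 ≤ p i) (hp1 : ∀ i, p i ≤ 1)
    (S : Finset (Finset Γ)) (s : ℝ) (hs : 0 ≤ s) (A : Finset Γ) :
    ((∏ i ∈ A, p i) - s * dA p S A) * L p S s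
      ≤ ∑ σ : Finset Γ, w p σ * (ind A σ * Real.exp (-(s * XS S σ))) := by
  set Y : Finset Γ → ℝ := fun σ => ∑ B ∈ NB S A, ind B σ with hY
  set Z : Finset Γ → ℝ := fun σ => ∑ B ∈ S.filter (fun B => ¬(B = A ∨ (A ∩ B).Nonempty)), ind B σ
    with hZ
  have hXYZ : ∀ σ, XS S σ = Y σ + Z σ := by
    intro σ
    rw [hY, hZ]
    unfold XS NB
    exact (Finset.sum_filter_add_sum_filter_not S _ _).symm
  have hY0 : ∀ σ, 0 ≤ Y σ := fun σ => Finset.sum_nonneg fun B _ => ind_nonneg B σ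
  have hZX : ∀ σ, Z σ ≤ XS S σ := fun σ => by rw [hXYZ σ]; linarith [hY0 σ]
  have hYmono : ∀ ⦃σ τ : Finset Γ⦄, σ ⊆ τ → Y σ ≤ Y τ := by
    intro σ τ h
    apply Finset.sum_le_sum
    intro B _
    unfold ind
    by_cases hB : B ⊆ σ
    · simp [hB, hB.trans h]
    · rw [if_neg hB]
      split <;> norm_num
  have hZmono : ∀ ⦃σ τ : Finset Γ⦄, σ ⊆ τ → Z σ ≤ Z τ := by
    intro σ τ h
    apply Finset.sum_le_sum
    intro B _
    unfold ind
    by_cases hB : B ⊆ σ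
    · simp [hB, hB.trans h]
    · rw [if_neg hB]
      split <;> norm_num
  have hfkg := harris p hp0 hp1 A
    (fun σ => Real.exp (-(s * Y σ))) (fun σ => Real.exp (-(s * Z σ)))
    (fun σ => (Real.exp_pos _).le) (fun σ => (Real.exp_pos _).le)
    (fun σ τ h => Real.exp_le_exp.2 (by nlinarith [hYmono h]))
    (fun σ τ h => Real.exp_le_exp.2 (by nlinarith [hZmono h]))
  have hprod : ∀ σ : Finset Γ, Real.exp (-(s * Y σ)) * Real.exp (-(s * Z σ))
      = Real.exp (-(s * XS S σ)) := by
    intro σ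
    rw [← Real.exp_add, hXYZ σ]
    ring_nf
  simp only [hprod] at hfkg
  have hZsd : ∀ σ, Z (σ \ A) = Z σ := by
    intro σ
    rw [hZ]
    apply Finset.sum_congr rfl
    intro B hB
    rw [Finset.mem_filter] at hB
    push_neg at hB
    obtain ⟨hBS, hBA, hBint⟩ := hB
    have hdisj : Disjoint B A := Finset.disjoint_right.2 fun i hiA hiB =>
      by simpa [hBint] using Finset.mem_inter.2 ⟨hiA, hiB⟩
    unfold ind
    by_cases hsub : B ⊆ σ
    · rw [if_pos (Finset.subset_sdiff.2 ⟨hsub, hdisj⟩), if_pos hsub]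
    · rw [if_neg (fun h => hsub (h.trans Finset.sdiff_subset)), if_neg hsub]
  have hindep := indep p A (fun σ => Real.exp (-(s * Z σ))) (fun σ => by
    show Real.exp (-(s * Z (σ \ A))) = _
    rw [hZsd σ])
  have hZL : L p S s ≤ ∑ σ : Finset Γ, w p σ * Real.exp (-(s * Z σ)) := by
    apply Finset.sum_le_sum
    intro σ _
    apply mul_le_mul_of_nonneg_left _ (w_nonneg p hp0 hp1 σ)
    apply Real.exp_le_exp.2
    nlinarith [hZX σ]
  have hEY0 : 0 ≤ ∑ σ : Finset Γ, w p σ * ind A σ * Real.exp (-(s * Y σ)) :=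
    Finset.sum_nonneg fun σ _ => mul_nonneg
      (mul_nonneg (w_nonneg p hp0 hp1 σ) (ind_nonneg A σ)) (Real.exp_pos _).le
  have hY1 : (∏ i ∈ A, p i) - s * dA p S A
      ≤ ∑ σ : Finset Γ, w p σ * ind A σ * Real.exp (-(s * Y σ)) := by
    have hpt : ∀ σ : Finset Γ, w p σ * ind A σ - s * (w p σ * (ind A σ * Y σ))
        ≤ w p σ * ind A σ * Real.exp (-(s * Y σ)) := by
      intro σ
      have h1 : 1 - s * Y σ ≤ Real.exp (-(s * Y σ)) := by
        have := Real.add_one_le_exp (-(s * Y σ))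
        linarith
      have h2 : 0 ≤ w p σ * ind A σ :=
        mul_nonneg (w_nonneg p hp0 hp1 σ) (ind_nonneg A σ)
      nlinarith [mul_le_mul_of_nonneg_left h1 h2]
    have hdA : dA p S A = ∑ σ : Finset Γ, w p σ * (ind A σ * Y σ) := by
      unfold dA
      calc ∑ B ∈ NB S A, ∏ i ∈ A ∪ B, p i
          = ∑ B ∈ NB S A, ∑ σ : Finset Γ, w p σ * ind (A ∪ B) σ :=
            Finset.sum_congr rfl fun B _ => (mass p (A ∪ B)).symm
        _ = ∑ σ : Finset Γ, ∑ B ∈ NB S A, w p σ * ind (A ∪ B) σ := Finset.sum_comm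
        _ = ∑ σ : Finset Γ, w p σ * (ind A σ * Y σ) := by
            refine Finset.sum_congr rfl fun σ _ => ?_
            rw [hY]
            simp only [Finset.mul_sum]
            refine Finset.sum_congr rfl fun B _ => ?_
            rw [← ind_mul_ind]
    calc (∏ i ∈ A, p i) - s * dA p S A
        = ∑ σ : Finset Γ, (w p σ * ind A σ - s * (w p σ * (ind A σ * Y σ))) := by
          rw [Finset.sum_sub_distrib, ← Finset.mul_sum, mass p A, hdA]
      _ ≤ _ := Finset.sum_le_sum fun σ _ => hpt σ
  -- combine
  have hRHS0 : 0 ≤ ∑ σ : Finset Γ, w p σ * (ind A σ * Real.exp (-(s * XS S σ))) :=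
    Finset.sum_nonneg fun σ _ => mul_nonneg (w_nonneg p hp0 hp1 σ)
      (mul_nonneg (ind_nonneg A σ) (Real.exp_pos _).le)
  have hδ0 : 0 ≤ dA p S A := Finset.sum_nonneg fun B _ =>
    Finset.prod_nonneg fun i _ => hp0 i
  by_cases hpA : (∏ i ∈ A, p i) = 0
  · have h1 : (∏ i ∈ A, p i) - s * dA p S A ≤ 0 := by
      rw [hpA]; nlinarith
    calc ((∏ i ∈ A, p i) - s * dA p S A) * L p S s ≤ 0 :=
          mul_nonpos_iff.2 (Or.inr ⟨h1, L_pos p hp0 hp1 S s⟩)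
      _ ≤ _ := hRHS0
  · have hpA' : 0 < ∏ i ∈ A, p i :=
      lt_of_le_of_ne (Finset.prod_nonneg fun i _ => hp0 i) (Ne.symm hpA)
    have hassoc1 : ∑ σ : Finset Γ, w p σ * ind A σ * Real.exp (-(s * Z σ))
        = ∑ σ : Finset Γ, w p σ * (ind A σ * Real.exp (-(s * Z σ))) :=
      Finset.sum_congr rfl fun σ _ => by ring
    have hassoc2 : ∑ σ : Finset Γ, w p σ * ind A σ * Real.exp (-(s * XS S σ))
        = ∑ σ : Finset Γ, w p σ * (ind A σ * Real.exp (-(s * XS S σ))) :=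
      Finset.sum_congr rfl fun σ _ => by ring
    rw [hassoc1, hassoc2] at hfkg
    rw [hindep] at hfkg
    -- hfkg : EY * (pA * EZ) ≤ pA * EiX
    have hEYEZ : (∑ σ : Finset Γ, w p σ * ind A σ * Real.exp (-(s * Y σ))) *
        (∑ σ : Finset Γ, w p σ * Real.exp (-(s * Z σ)))
        ≤ ∑ σ : Finset Γ, w p σ * (ind A σ * Real.exp (-(s * XS S σ))) := by
      have := hfkg
      rw [show (∑ σ : Finset Γ, w p σ * ind A σ * Real.exp (-(s * Y σ))) *
          ((∏ i ∈ A, p i) * ∑ σ : Finset Γ, w p σ * Real.exp (-(s * Z σ)))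
          = (∏ i ∈ A, p i) * ((∑ σ : Finset Γ, w p σ * ind A σ * Real.exp (-(s * Y σ))) *
            (∑ σ : Finset Γ, w p σ * Real.exp (-(s * Z σ)))) from by ring] at this
      exact le_of_mul_le_mul_left this hpA'
    calc ((∏ i ∈ A, p i) - s * dA p S A) * L p S s
        ≤ (∑ σ : Finset Γ, w p σ * ind A σ * Real.exp (-(s * Y σ))) * L p S s :=
          mul_le_mul_of_nonneg_right hY1 (L_pos p hp0 hp1 S s)
      _ ≤ (∑ σ : Finset Γ, w p σ * ind A σ * Real.exp (-(s * Y σ))) *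
          (∑ σ : Finset Γ, w p σ * Real.exp (-(s * Z σ))) :=
          mul_le_mul_of_nonneg_left hZL hEY0
      _ ≤ _ := hEYEZ

end Janson5

namespace Janson6
open Janson Janson2 Janson3 Janson4 Janson5

variable {Γ : Type*} [Fintype Γ] [DecidableEq Γ]

set_option linter.unusedSectionVars false
set_option maxHeartbeats 1000000

lemma keysum (p : Γ → ℝ) (hp0 : ∀ i, 0 ≤ p i) (hp1 : ∀ i, p i ≤ 1)
    (S : Finset (Finset Γ)) (s : ℝ) (hs : 0 ≤ s) :
    ((∑ A ∈ S, ∏ i ∈ A, p i) - s * ∑ A ∈ S, dA p S A) * L p S s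
      ≤ ∑ σ : Finset Γ, w p σ * (XS S σ * Real.exp (-(s * XS S σ))) := by
  have hswap : ∑ σ : Finset Γ, w p σ * (XS S σ * Real.exp (-(s * XS S σ)))
      = ∑ A ∈ S, ∑ σ : Finset Γ, w p σ * (ind A σ * Real.exp (-(s * XS S σ))) := by
    rw [Finset.sum_comm]
    refine Finset.sum_congr rfl fun σ _ => ?_
    unfold XS
    rw [Finset.sum_mul, Finset.mul_sum]
  rw [hswap]
  calc ((∑ A ∈ S, ∏ i ∈ A, p i) - s * ∑ A ∈ S, dA p S A) * L p S s
      = ∑ A ∈ S, ((∏ i ∈ A, p i) - s * dA p S A) * L p S s := by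
        rw [← Finset.sum_mul, Finset.mul_sum, Finset.sum_sub_distrib]
    _ ≤ _ := Finset.sum_le_sum fun A _ => key p hp0 hp1 S s hs A

lemma Lbound (p : Γ → ℝ) (hp0 : ∀ i, 0 ≤ p i) (hp1 : ∀ i, p i ≤ 1)
    (S : Finset (Finset Γ)) {s : ℝ} (hs : 0 ≤ s) :
    L p S s ≤ Real.exp (-(s * (∑ A ∈ S, ∏ i ∈ A, p i)
      - s ^ 2 * (∑ A ∈ S, dA p S A) / 2)) := by
  set μ := ∑ A ∈ S, ∏ i ∈ A, p i with hμ
  set Δ := ∑ A ∈ S, dA p S A with hΔ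
  set E : ℝ → ℝ := fun u => u * μ - u ^ 2 * (Δ / 2) with hE
  set G : ℝ → ℝ := fun u => L p S u * Real.exp (E u) with hG
  have hL' : ∀ u : ℝ, HasDerivAt (fun u => L p S u)
      (∑ σ : Finset Γ, w p σ * (Real.exp (-(u * XS S σ)) * (-(XS S σ)))) u := by
    intro u
    have : (fun u => L p S u) = fun u => ∑ σ : Finset Γ, w p σ * Real.exp (-(u * XS S σ)) := by
      funext u; rfl
    rw [this]
    apply HasDerivAt.fun_sum
    intro σ _
    have h1 : HasDerivAt (fun u : ℝ => -(u * XS S σ)) (-(XS S σ)) u := by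
      have h := ((hasDerivAt_id' u).mul_const (XS S σ)).neg
      rw [one_mul] at h
      exact h
    exact (h1.exp).const_mul (w p σ)
  have hE' : ∀ u : ℝ, HasDerivAt E (μ - u * Δ) u := by
    intro u
    have h2 : HasDerivAt (fun u : ℝ => u ^ 2 * (Δ / 2)) (u * Δ) u := by
      have h := (hasDerivAt_pow 2 u).mul_const (Δ / 2)
      have hv : ((2:ℕ) : ℝ) * u ^ (2 - 1) * (Δ / 2) = u * Δ := by push_cast; ring
      rwa [hv] at h
    have h3 := ((hasDerivAt_id' u).mul_const μ).sub h2
    rw [one_mul] at h3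
    exact h3
  have hG' : ∀ u : ℝ, HasDerivAt G
      ((∑ σ : Finset Γ, w p σ * (Real.exp (-(u * XS S σ)) * (-(XS S σ)))) * Real.exp (E u)
        + L p S u * (Real.exp (E u) * (μ - u * Δ))) u := by
    intro u
    exact (hL' u).mul ((hE' u).exp)
  have hmono : AntitoneOn G (Set.Ici (0 : ℝ)) := by
    apply antitoneOn_of_deriv_nonpos (convex_Ici 0)
    · apply Continuous.continuousOn
      have : Differentiable ℝ G := fun u => (hG' u).differentiableAt
      exact this.continuous
    · intro u _
      exact (hG' u).differentiableAt.differentiableWithinAt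
    · intro u hu
      rw [interior_Ici] at hu
      have hu0 : (0 : ℝ) ≤ u := le_of_lt hu
      rw [(hG' u).deriv]
      have hks := keysum p hp0 hp1 S u hu0
      have hexp : (0 : ℝ) < Real.exp (E u) := Real.exp_pos _
      have hterm : ∑ σ : Finset Γ, w p σ * (Real.exp (-(u * XS S σ)) * (-(XS S σ)))
          = -∑ σ : Finset Γ, w p σ * (XS S σ * Real.exp (-(u * XS S σ))) := by
        rw [← Finset.sum_neg_distrib]
        exact Finset.sum_congr rfl fun σ _ => by ring
      rw [hterm]
      rw [← hμ, ← hΔ] at hks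
      nlinarith [hks, hexp]
  have hG0 : G 0 = 1 := by
    have hL0 : L p S 0 = 1 := by
      unfold L
      simp only [zero_mul, neg_zero, Real.exp_zero, mul_one]
      exact total p
    rw [hG]
    simp [hL0, hE]
  have hGs : G s ≤ 1 := by
    rw [← hG0]
    exact hmono Set.self_mem_Ici hs hs
  have hexpE : Real.exp (-(E s)) * Real.exp (E s) = 1 := by
    rw [← Real.exp_add]
    simp
  have hexppos : (0:ℝ) < Real.exp (E s) := Real.exp_pos _
  have : L p S s * Real.exp (E s) ≤ Real.exp (-(E s)) * Real.exp (E s) := by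
    rw [hexpE]; exact hGs
  have hfin : L p S s ≤ Real.exp (-(E s)) := le_of_mul_le_mul_right this hexppos
  calc L p S s ≤ Real.exp (-(E s)) := hfin
    _ = Real.exp (-(s * μ - s ^ 2 * Δ / 2)) := by
        congr 1
        rw [hE]
        ring

end Janson6

namespace Janson7
open Janson Janson2 Janson3 Janson4 Janson5 Janson6

variable {Γ : Type*} [Fintype Γ] [DecidableEq Γ]

set_option linter.unusedSectionVars false
set_option maxHeartbeats 1000000

lemma delta_eq (p : Γ → ℝ) (S : Finset (Finset Γ)) :
    ∑ A ∈ S, dA p S A = (∑ A ∈ S, ∏ i ∈ A, p i) +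
      ∑ A ∈ S, ∑ B ∈ S, if B ≠ A ∧ (A ∩ B).Nonempty then ∏ i ∈ A ∪ B, p i else 0 := by
  rw [← Finset.sum_add_distrib]
  refine Finset.sum_congr rfl fun A hA => ?_
  unfold dA NB
  rw [Finset.sum_filter]
  have hpt : ∀ B : Finset Γ,
      (if B = A ∨ (A ∩ B).Nonempty then ∏ i ∈ A ∪ B, p i else 0)
      = (if B = A then ∏ i ∈ A ∪ B, p i else 0)
        + (if B ≠ A ∧ (A ∩ B).Nonempty then ∏ i ∈ A ∪ B, p i else 0) := by
    intro B
    by_cases h1 : B = A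
    · simp [h1]
    · by_cases h2 : (A ∩ B).Nonempty <;> simp [h1, h2]
  rw [Finset.sum_congr rfl fun B _ => hpt B, Finset.sum_add_distrib]
  congr 1
  rw [Finset.sum_ite_eq' S A (fun B => ∏ i ∈ A ∪ B, p i), if_pos hA, Finset.union_self]

lemma mu_le_delta (p : Γ → ℝ) (hp0 : ∀ i, 0 ≤ p i) (S : Finset (Finset Γ)) :
    (∑ A ∈ S, ∏ i ∈ A, p i) ≤ ∑ A ∈ S, dA p S A := by
  refine Finset.sum_le_sum fun A hA => ?_
  unfold dA
  have hmem : A ∈ NB S A := by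
    unfold NB
    rw [Finset.mem_filter]
    exact ⟨hA, Or.inl rfl⟩
  have := Finset.single_le_sum (f := fun B => ∏ i ∈ A ∪ B, p i)
    (fun B _ => Finset.prod_nonneg fun i _ => hp0 i) hmem
  simp only [Finset.union_self] at this
  exact this

lemma delta_nonneg (p : Γ → ℝ) (hp0 : ∀ i, 0 ≤ p i) (S : Finset (Finset Γ)) :
    0 ≤ ∑ A ∈ S, dA p S A :=
  Finset.sum_nonneg fun A _ => Finset.sum_nonneg fun B _ =>
    Finset.prod_nonneg fun i _ => hp0 i

lemma main (p : Γ → ℝ) (hp0 : ∀ i, 0 ≤ p i) (hp1 : ∀ i, p i ≤ 1)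
    (S : Finset (Finset Γ)) (t : ℝ) (ht0 : 0 ≤ t)
    (ht : t ≤ ∑ A ∈ S, ∏ i ∈ A, p i) :
    (∑ σ : Finset Γ, if XS S σ ≤ (∑ A ∈ S, ∏ i ∈ A, p i) - t then w p σ else 0)
      ≤ Real.exp (-(t ^ 2) / (2 * ∑ A ∈ S, dA p S A)) := by
  set μ := ∑ A ∈ S, ∏ i ∈ A, p i with hμ
  set Δ := ∑ A ∈ S, dA p S A with hΔ
  have hΔ0 : 0 ≤ Δ := delta_nonneg p hp0 S
  rcases eq_or_lt_of_le hΔ0 with hΔz | hΔpos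
  · -- Δ = 0, hence μ = 0, t = 0, RHS = 1
    have hexp : Real.exp (-(t ^ 2) / (2 * Δ)) = 1 := by
      have hμ0 : μ ≤ 0 := by
        have := mu_le_delta p hp0 S
        rw [← hμ, ← hΔ] at this
        linarith
      have ht0' : t = 0 := le_antisymm (ht.trans hμ0) ht0
      rw [ht0', ← hΔz]
      norm_num
    rw [hexp]
    calc (∑ σ : Finset Γ, if XS S σ ≤ μ - t then w p σ else 0)
        ≤ ∑ σ : Finset Γ, w p σ := Finset.sum_le_sum fun σ _ => by
          split
          · exact le_refl _
          · exact w_nonneg p hp0 hp1 σ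
      _ = 1 := total p
  · set s := t / Δ with hsdef
    have hs : 0 ≤ s := div_nonneg ht0 (le_of_lt hΔpos)
    have hchern : (∑ σ : Finset Γ, if XS S σ ≤ μ - t then w p σ else 0)
        ≤ Real.exp (s * (μ - t)) * L p S s := by
      unfold L
      rw [Finset.mul_sum]
      refine Finset.sum_le_sum fun σ _ => ?_
      split
      · rename_i hcond
        calc w p σ = w p σ * 1 := by ring
          _ ≤ w p σ * (Real.exp (s * (μ - t)) * Real.exp (-(s * XS S σ))) := by
              apply mul_le_mul_of_nonneg_left _ (w_nonneg p hp0 hp1 σ)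
              rw [← Real.exp_add]
              apply Real.one_le_exp
              nlinarith [hcond]
          _ = Real.exp (s * (μ - t)) * (w p σ * Real.exp (-(s * XS S σ))) := by ring
      · exact mul_nonneg (Real.exp_pos _).le
          (mul_nonneg (w_nonneg p hp0 hp1 σ) (Real.exp_pos _).le)
    have hLb := Lbound p hp0 hp1 S hs
    rw [← hμ, ← hΔ] at hLb
    calc (∑ σ : Finset Γ, if XS S σ ≤ μ - t then w p σ else 0)
        ≤ Real.exp (s * (μ - t)) * L p S s := hchern
      _ ≤ Real.exp (s * (μ - t)) * Real.exp (-(s * μ - s ^ 2 * Δ / 2)) :=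
          mul_le_mul_of_nonneg_left hLb (Real.exp_pos _).le
      _ = Real.exp (s * (μ - t) + -(s * μ - s ^ 2 * Δ / 2)) := (Real.exp_add _ _).symm
      _ = Real.exp (-(t ^ 2) / (2 * Δ)) := by
          congr 1
          rw [hsdef]
          field_simp
          ring

end Janson7

open Janson Janson2 Janson3 Janson4 Janson5 Janson6 Janson7 in
/-- Janson's inequality. `Γ` is a finite ground set, element `i` is included in
the random subset independently with probability `p i`, `S` is a family of
subsets of `Γ`, and `X = Σ_{A ∈ S} 1[A ⊆ random subset]`. For
`0 ≤ t ≤ E[X]`, `P[X ≤ E[X] - t] ≤ exp(-t² / (2 Δ̄))` where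
`Δ̄ = E[X] + Σ_{A ∈ S} Σ_{B ∈ S, B ≠ A, A ∩ B ≠ ∅} E[X_A X_B]`. -/
theorem stmt17 {Γ : Type*} [Fintype Γ] [DecidableEq Γ] (p : Γ → ℝ)
    (hp0 : ∀ i, 0 ≤ p i) (hp1 : ∀ i, p i ≤ 1)
    (S : Finset (Finset Γ)) (t : ℝ) (ht0 : 0 ≤ t)
    (ht : t ≤ ∑ A ∈ S, ∏ i ∈ A, p i) :
    (∑ ω : Γ → Bool,
        if ((S.filter (fun A => ∀ i ∈ A, ω i = true)).card : ℝ) ≤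
            (∑ A ∈ S, ∏ i ∈ A, p i) - t then
          ∏ i, (if ω i then p i else 1 - p i)
        else 0)
      ≤ Real.exp (-(t ^ 2) /
          (2 * ((∑ A ∈ S, ∏ i ∈ A, p i) +
            ∑ A ∈ S, ∑ B ∈ S,
              if B ≠ A ∧ (A ∩ B).Nonempty then ∏ i ∈ A ∪ B, p i else 0))) := by
  classical
  set f : (Γ → Bool) → Finset Γ := fun ω => univ.filter (fun i => ω i = true) with hf
  have hmem : ∀ (ω : Γ → Bool) (i : Γ), i ∈ f ω ↔ ω i = true := by
    intro ω i
    rw [hf]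
    simp
  have hbij : Function.Bijective f := by
    constructor
    · intro ω₁ ω₂ h
      funext i
      have hiff : ω₁ i = true ↔ ω₂ i = true := by
        rw [← hmem ω₁ i, ← hmem ω₂ i, h]
      cases hv1 : ω₁ i <;> cases hv2 : ω₂ i
      · rfl
      · exact absurd (hiff.2 hv2) (by simp [hv1])
      · exact absurd (hiff.1 hv1) (by simp [hv2])
      · rfl
    · intro σ
      refine ⟨fun i => decide (i ∈ σ), ?_⟩
      rw [hf]
      ext i
      simp
  have hsum : (∑ ω : Γ → Bool,
        if ((S.filter (fun A => ∀ i ∈ A, ω i = true)).card : ℝ) ≤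
            (∑ A ∈ S, ∏ i ∈ A, p i) - t then
          ∏ i, (if ω i then p i else 1 - p i)
        else 0)
      = ∑ σ : Finset Γ, if XS S σ ≤ (∑ A ∈ S, ∏ i ∈ A, p i) - t then w p σ else 0 := by
    apply Fintype.sum_bijective f hbij
    intro ω
    have hcard : ((S.filter (fun A => ∀ i ∈ A, ω i = true)).card : ℝ) = XS S (f ω) := by
      unfold XS ind
      rw [Finset.sum_boole]
      congr 2
      apply Finset.filter_congr
      intro A _
      constructor
      · intro h i hi
        exact (hmem ω i).2 (h i hi)
      · intro h i hi
        exact (hmem ω i).1 (h hi)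
    have hw : (∏ i, (if ω i then p i else 1 - p i)) = w p (f ω) := by
      unfold w
      rw [← Finset.prod_filter_mul_prod_filter_not univ (fun i => ω i = true)]
      congr 1
      · apply Finset.prod_congr rfl
        intro i hi
        rw [Finset.mem_filter] at hi
        simp [hi.2]
      · rw [show (univ.filter (fun i => ¬ ω i = true)) = ((f ω)ᶜ : Finset Γ) from by
          rw [hf]; ext i; simp [Bool.not_eq_true]]
        apply Finset.prod_congr rfl
        intro i hi
        rw [Finset.mem_compl, hmem] at hi
        simp [hi]
    rw [hcard, hw]
  rw [hsum, ← delta_eq p S]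
  exact main p hp0 hp1 S t ht0 ht
end
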